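/- arXiv:2007.07104 — 2 statements merged into one kernel-verified Lean document; each statement's English description precedes it below -/
import Mathlib

section
/- A mechanism φ is strategyproof if and only if it is separation monotonic (separation responsive and separation direct), separation upper invariant, and separation lower invariant. -/
open Finset

/-- An ordered partition `M_1 P ... P M_K` of a finite set `α` is encoded by a rank
function `R : α → ℕ`: alternative `a` lies in class `M_{R a}` (0-indexed), and lower
rank means more preferred.  `j` is weakly preferred to `a` iff `R j ≤ R a`. -/
def classOf {α : Type} [Fintype α] (R : α → ℕ) (k : ℕ) : Finset α :=
  Finset.univ.filter fun a => R a = k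

/-- `probOf x A = x_A = ∑_{a ∈ A} x_a`. -/
def probOf {α : Type} [Fintype α] (x : α → ℝ) (A : Finset α) : ℝ := ∑ a ∈ A, x a

/-- `x` is a lottery (probability distribution) on `α`. -/
def IsLottery {α : Type} [Fintype α] (x : α → ℝ) : Prop :=
  (∀ a, 0 ≤ x a) ∧ ∑ a, x a = 1

/-- `x` first order-stochastically dominates `y` at `R`. -/
def SD {α : Type} [Fintype α] (R : α → ℕ) (x y : α → ℝ) : Prop :=
  ∀ a : α, ∑ j ∈ Finset.univ.filter (fun j => R j ≤ R a), x j ≥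
           ∑ j ∈ Finset.univ.filter (fun j => R j ≤ R a), y j

/-- A rank function is canonical if its range is an initial segment of ℕ,
i.e. all indifference classes `M_1, …, M_K` are nonempty. -/
def Canonical {α : Type} (R : α → ℕ) : Prop :=
  ∀ a : α, ∀ k, k ≤ R a → ∃ b, R b = k

/-- Strategyproofness: for all preference orders `R, R'`, `φ(R)` first
order-stochastically dominates `φ(R')` at `R`. -/
def Strategyproof {α : Type} [Fintype α] (φ : (α → ℕ) → α → ℝ) : Prop :=
  ∀ R R' : α → ℕ, Canonical R → Canonical R' → SD R (φ R) (φ R')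

/-- `(R, R')` is a separation with split at index `κ`: `R'` splits the indifference
class `M_κ` of `R` into two nonempty parts `M_κ^1 = classOf R' κ` (preferred) and
`M_κ^2 = classOf R' (κ+1)`, all other classes unchanged (classes below `κ` keep their
rank, classes above `κ` are shifted by one). -/
def IsSeparation {α : Type} [Fintype α] (R R' : α → ℕ) (κ : ℕ) : Prop :=
  Canonical R ∧
  (∀ a, R a < κ → R' a = R a) ∧
  (∀ a, R a = κ → R' a = κ ∨ R' a = κ + 1) ∧
  (∀ a, κ < R a → R' a = R a + 1) ∧
  (∃ a, R a = κ ∧ R' a = κ) ∧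
  (∃ a, R a = κ ∧ R' a = κ + 1)

/-- Separation upper invariance: the probability of every class ranked above the
split class is unchanged. -/
def SepUpperInvariant {α : Type} [Fintype α] (φ : (α → ℕ) → α → ℝ) : Prop :=
  ∀ R R' κ, IsSeparation R R' κ →
    ∀ k < κ, probOf (φ R) (classOf R k) = probOf (φ R') (classOf R k)

/-- Separation lower invariance: the probability of every class ranked below the
split class is unchanged. -/
def SepLowerInvariant {α : Type} [Fintype α] (φ : (α → ℕ) → α → ℝ) : Prop :=
  ∀ R R' κ, IsSeparation R R' κ →
    ∀ k, κ < k → probOf (φ R) (classOf R k) = probOf (φ R') (classOf R k)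

/-- Separation responsiveness: `φ_{M_κ^1}(R') ≥ φ_{M_κ^1}(R)` and
`φ_{M_κ^2}(R') ≤ φ_{M_κ^2}(R)`. -/
def SepResponsive {α : Type} [Fintype α] (φ : (α → ℕ) → α → ℝ) : Prop :=
  ∀ R R' κ, IsSeparation R R' κ →
    probOf (φ R') (classOf R' κ) ≥ probOf (φ R) (classOf R' κ) ∧
    probOf (φ R') (classOf R' (κ + 1)) ≤ probOf (φ R) (classOf R' (κ + 1))

/-- Separation directness: if the probability of some class changes under a
separation, then both the probabilities of `M_κ^1` and of `M_κ^2` change. -/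
def SepDirect {α : Type} [Fintype α] (φ : (α → ℕ) → α → ℝ) : Prop :=
  ∀ R R' κ, IsSeparation R R' κ →
    (∃ k, probOf (φ R) (classOf R k) ≠ probOf (φ R') (classOf R k)) →
    probOf (φ R') (classOf R' κ) ≠ probOf (φ R) (classOf R' κ) ∧
    probOf (φ R') (classOf R' (κ + 1)) ≠ probOf (φ R) (classOf R' (κ + 1))


namespace SPaux

set_option linter.unusedSectionVars false
variable {α : Type} [Fintype α] [DecidableEq α]

lemma mem_classOf {R : α → ℕ} {k : ℕ} {a : α} : a ∈ classOf R k ↔ R a = k := by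
  simp [classOf]

lemma probOf_union {x : α → ℝ} {s t : Finset α} (h : Disjoint s t) :
    probOf x (s ∪ t) = probOf x s + probOf x t := Finset.sum_union h

lemma probOf_univ {x : α → ℝ} (h : IsLottery x) : probOf x Finset.univ = 1 := h.2

def toRank : List (Finset α) → α → ℕ
  | [], _ => 0
  | s :: l, a => if a ∈ s then 0 else toRank l a + 1

lemma toRank_nil {a : α} : toRank [] a = 0 := rfl

lemma toRank_cons {s : Finset α} {l : List (Finset α)} {a : α} :
    toRank (s :: l) a = if a ∈ s then 0 else toRank l a + 1 := rfl

lemma toRank_eq_length {l : List (Finset α)} {a : α} (h : ∀ s ∈ l, a ∉ s) :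
    toRank l a = l.length := by
  induction l with
  | nil => rfl
  | cons s l ih =>
      have : a ∉ s := h s (by simp)
      simp [toRank_cons, this, ih (fun t ht => h t (by simp [ht]))]

lemma toRank_lt {l : List (Finset α)} {a : α} (h : ∃ s ∈ l, a ∈ s) :
    toRank l a < l.length := by
  induction l with
  | nil => simp at h
  | cons s l ih =>
      by_cases hs : a ∈ s
      · simp [toRank_cons, hs]
      · obtain ⟨t, ht, hat⟩ := h
        rcases List.mem_cons.1 ht with rfl | ht'
        · exact absurd hat hs
        · have := ih ⟨t, ht', hat⟩
          simp [toRank_cons, hs]; omega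

lemma toRank_append_left {l₁ l₂ : List (Finset α)} {a : α} (h : ∃ s ∈ l₁, a ∈ s) :
    toRank (l₁ ++ l₂) a = toRank l₁ a := by
  induction l₁ with
  | nil => simp at h
  | cons s l ih =>
      by_cases hs : a ∈ s
      · simp [toRank_cons, hs]
      · obtain ⟨t, ht, hat⟩ := h
        rcases List.mem_cons.1 ht with rfl | ht'
        · exact absurd hat hs
        · simp [toRank_cons, hs, ih ⟨t, ht', hat⟩]

lemma toRank_append_right {l₁ l₂ : List (Finset α)} {a : α} (h : ∀ s ∈ l₁, a ∉ s) :
    toRank (l₁ ++ l₂) a = l₁.length + toRank l₂ a := by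
  induction l₁ with
  | nil => simp
  | cons s l ih =>
      have hs : a ∉ s := h s (by simp)
      simp [toRank_cons, hs, ih (fun t ht => h t (by simp [ht]))]; omega

/-- validity of an ordered-partition list -/
structure LV (l : List (Finset α)) : Prop where
  pw : l.Pairwise Disjoint
  ne : ∀ s ∈ l, s.Nonempty
  cov : ∀ a : α, ∃ s ∈ l, a ∈ s

lemma classOf_toRank {l l₁ l₂ : List (Finset α)} {s : Finset α}
    (hpw : l.Pairwise Disjoint) (hl : l = l₁ ++ s :: l₂) :
    classOf (toRank l) l₁.length = s := by
  subst hl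
  have hdisj : ∀ t ∈ l₁, Disjoint t s := by
    rw [List.pairwise_append] at hpw
    exact fun t ht => hpw.2.2 t ht s (by simp)
  ext a
  rw [mem_classOf]
  constructor
  · intro h
    by_cases hc : ∃ t ∈ l₁, a ∈ t
    · have := toRank_append_left (l₂ := s :: l₂) hc
      have := toRank_lt hc
      omega
    · push_neg at hc
      rw [toRank_append_right hc] at h
      have h0 : toRank (s :: l₂) a = 0 := by omega
      by_cases hs : a ∈ s
      · exact hs
      · simp [toRank_cons, hs] at h0
  · intro ha
    have hc : ∀ t ∈ l₁, a ∉ t := fun t ht =>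
      Finset.disjoint_right.1 (hdisj t ht) ha
    rw [toRank_append_right hc]
    simp [toRank_cons, ha]

lemma mem_classOf_toRank {l : List (Finset α)} {a : α} {k : ℕ} :
    a ∈ classOf (toRank l) k ↔ toRank l a = k := mem_classOf

lemma exists_toRank_eq {l : List (Finset α)} (hpw : l.Pairwise Disjoint)
    (hne : ∀ s ∈ l, s.Nonempty) {k : ℕ} (hk : k < l.length) :
    ∃ b, toRank l b = k ∧ ∃ s ∈ l, b ∈ s := by
  induction l generalizing k with
  | nil => simp at hk
  | cons s l ih =>
      rcases k with _ | k
      · obtain ⟨b, hb⟩ := hne s (by simp)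
        exact ⟨b, by simp [toRank_cons, hb], s, by simp, hb⟩
      · have hk' : k < l.length := by simp at hk; omega
        obtain ⟨b, hb, t, ht, hbt⟩ := ih (List.Pairwise.of_cons hpw)
          (fun t ht => hne t (by simp [ht])) hk'
        have hbs : b ∉ s := by
          have := (List.pairwise_cons.1 hpw).1 t ht
          exact Finset.disjoint_left.1 this.symm hbt
        exact ⟨b, by simp [toRank_cons, hbs, hb], t, by simp [ht], hbt⟩

lemma canonical_toRank {l : List (Finset α)} (h : LV l) : Canonical (toRank l) := by
  intro a k hk
  have := toRank_lt (h.cov a)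
  obtain ⟨b, hb, -⟩ := exists_toRank_eq h.pw h.ne (k := k) (by omega)
  exact ⟨b, hb⟩

lemma sum_map_probOf {x : α → ℝ} :
    ∀ {l : List (Finset α)}, l.Pairwise Disjoint →
      ∀ {S : Finset α}, (∀ a, a ∈ S ↔ ∃ s ∈ l, a ∈ s) →
        (l.map (probOf x)).sum = probOf x S := by
  intro l
  induction l with
  | nil =>
      intro _ S hS
      have : S = ∅ := by
        ext a; simp [hS a]
      simp [this, probOf]
  | cons s l ih =>
      intro hpw S hS
      have hdis : ∀ t ∈ l, Disjoint s t := (List.pairwise_cons.1 hpw).1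
      have hmem : ∀ a, a ∈ S \ s ↔ ∃ t ∈ l, a ∈ t := by
        intro a
        simp only [Finset.mem_sdiff]
        constructor
        · rintro ⟨haS, has⟩
          rcases (hS a).1 haS with ⟨t, ht, hat⟩
          rcases List.mem_cons.1 ht with rfl | ht'
          · exact absurd hat has
          · exact ⟨t, ht', hat⟩
        · rintro ⟨t, ht, hat⟩
          exact ⟨(hS a).2 ⟨t, by simp [ht], hat⟩,
            Finset.disjoint_right.1 (hdis t ht) hat⟩
      have hsub : s ⊆ S := fun a ha => (hS a).2 ⟨s, by simp, ha⟩
      rw [List.map_cons, List.sum_cons, ih (List.Pairwise.of_cons hpw) hmem]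
      have := Finset.sum_sdiff (f := x) hsub
      unfold probOf
      linarith

theorem sep_of_lists {l₁ l₂ : List (Finset α)} {E F₁ F₂ : Finset α}
    (hv : LV (l₁ ++ E :: l₂)) (h1 : F₁.Nonempty) (h2 : F₂.Nonempty)
    (hd : Disjoint F₁ F₂) (hu : F₁ ∪ F₂ = E) :
    IsSeparation (toRank (l₁ ++ E :: l₂)) (toRank (l₁ ++ F₁ :: F₂ :: l₂)) l₁.length ∧
      LV (l₁ ++ F₁ :: F₂ :: l₂) := by
  have hF1E : F₁ ⊆ E := hu ▸ Finset.subset_union_left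
  have hF2E : F₂ ⊆ E := hu ▸ Finset.subset_union_right
  have hpw := hv.pw
  rw [List.pairwise_append] at hpw
  obtain ⟨hpw1, hpw2, hcross⟩ := hpw
  rw [List.pairwise_cons] at hpw2
  obtain ⟨hEl₂, hpwl₂⟩ := hpw2
  have hv' : LV (l₁ ++ F₁ :: F₂ :: l₂) := by
    constructor
    · rw [List.pairwise_append]
      refine ⟨hpw1, ?_, ?_⟩
      · rw [List.pairwise_cons]
        constructor
        · intro t ht
          rcases List.mem_cons.1 ht with rfl | ht'
          · exact hd
          · exact Finset.disjoint_of_subset_left hF1E (hEl₂ t ht')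
        · rw [List.pairwise_cons]
          exact ⟨fun t ht' => Finset.disjoint_of_subset_left hF2E (hEl₂ t ht'), hpwl₂⟩
      · intro a ha b hb
        rcases List.mem_cons.1 hb with rfl | hb'
        · exact Finset.disjoint_of_subset_right hF1E (hcross a ha E (by simp))
        rcases List.mem_cons.1 hb' with rfl | hb''
        · exact Finset.disjoint_of_subset_right hF2E (hcross a ha E (by simp))
        · exact hcross a ha b (by simp [hb''])
    · intro s hs
      rcases List.mem_append.1 hs with hs1 | hs2
      · exact hv.ne s (by simp [hs1])
      rcases List.mem_cons.1 hs2 with rfl | hs3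
      · exact h1
      rcases List.mem_cons.1 hs3 with rfl | hs4
      · exact h2
      · exact hv.ne s (by simp [List.mem_append, hs4])
    · intro a
      obtain ⟨s, hs, has⟩ := hv.cov a
      rcases List.mem_append.1 hs with hs1 | hs2
      · exact ⟨s, by simp [hs1], has⟩
      rcases List.mem_cons.1 hs2 with rfl | hs3
      · rcases Finset.mem_union.1 (hu ▸ has) with h | h
        · exact ⟨F₁, by simp, h⟩
        · exact ⟨F₂, by simp, h⟩
      · exact ⟨s, by simp [List.mem_append, hs3], has⟩
  have regE : ∀ a ∈ E, ∀ s ∈ l₁, a ∉ s := fun a haE s hs =>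
    Finset.disjoint_right.1 (hcross s hs E (by simp)) haE
  have regL2 : ∀ a, (∃ s ∈ l₂, a ∈ s) →
      (∀ s ∈ l₁, a ∉ s) ∧ a ∉ E ∧ a ∉ F₁ ∧ a ∉ F₂ := by
    rintro a ⟨t, ht, hat⟩
    have haE : a ∉ E := Finset.disjoint_right.1 (hEl₂ t ht) hat
    exact ⟨fun s hs => Finset.disjoint_right.1 (hcross s hs t (by simp [ht])) hat,
      haE, fun h => haE (hF1E h), fun h => haE (hF2E h)⟩
  have vQl₁ : ∀ a, (∃ s ∈ l₁, a ∈ s) →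
      toRank (l₁ ++ E :: l₂) a = toRank l₁ a ∧
      toRank (l₁ ++ F₁ :: F₂ :: l₂) a = toRank l₁ a ∧ toRank l₁ a < l₁.length :=
    fun a h => ⟨toRank_append_left h, toRank_append_left h, toRank_lt h⟩
  have vQE : ∀ a ∈ E, toRank (l₁ ++ E :: l₂) a = l₁.length := by
    intro a ha
    rw [toRank_append_right (regE a ha)]
    simp [toRank_cons, ha]
  have vQ'F₁ : ∀ a ∈ F₁, toRank (l₁ ++ F₁ :: F₂ :: l₂) a = l₁.length := by
    intro a ha
    rw [toRank_append_right (regE a (hF1E ha))]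
    simp [toRank_cons, ha]
  have vQ'F₂ : ∀ a ∈ F₂, toRank (l₁ ++ F₁ :: F₂ :: l₂) a = l₁.length + 1 := by
    intro a ha
    have ha1 : a ∉ F₁ := Finset.disjoint_right.1 hd ha
    rw [toRank_append_right (regE a (hF2E ha))]
    simp [toRank_cons, ha, ha1]
  have vQl₂ : ∀ a, (∃ s ∈ l₂, a ∈ s) →
      toRank (l₁ ++ E :: l₂) a = l₁.length + 1 + toRank l₂ a ∧
      toRank (l₁ ++ F₁ :: F₂ :: l₂) a = l₁.length + 2 + toRank l₂ a := by
    intro a ha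
    obtain ⟨hl₁, hE, hF₁, hF₂⟩ := regL2 a ha
    constructor
    · rw [toRank_append_right hl₁]; simp [toRank_cons, hE]; omega
    · rw [toRank_append_right hl₁]; simp [toRank_cons, hF₁, hF₂]; omega
  have regions : ∀ a : α, (∃ s ∈ l₁, a ∈ s) ∨ a ∈ F₁ ∨ a ∈ F₂ ∨ (∃ s ∈ l₂, a ∈ s) := by
    intro a
    obtain ⟨s, hs, has⟩ := hv.cov a
    rcases List.mem_append.1 hs with hs1 | hs2
    · exact Or.inl ⟨s, hs1, has⟩
    rcases List.mem_cons.1 hs2 with rfl | hs3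
    · rcases Finset.mem_union.1 (hu ▸ has) with h | h
      · exact Or.inr (Or.inl h)
      · exact Or.inr (Or.inr (Or.inl h))
    · exact Or.inr (Or.inr (Or.inr ⟨s, hs3, has⟩))
  refine ⟨⟨canonical_toRank hv, ?_, ?_, ?_, ?_, ?_⟩, hv'⟩
  · intro a hlt
    rcases regions a with h | h | h | h
    · exact ((vQl₁ a h).2.1).trans ((vQl₁ a h).1).symm
    · rw [vQE a (hF1E h)] at hlt; omega
    · rw [vQE a (hF2E h)] at hlt; omega
    · rw [(vQl₂ a h).1] at hlt; omega
  · intro a heq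
    rcases regions a with h | h | h | h
    · have := (vQl₁ a h); omega
    · exact Or.inl (vQ'F₁ a h)
    · exact Or.inr (vQ'F₂ a h)
    · have := (vQl₂ a h).1; omega
  · intro a hgt
    rcases regions a with h | h | h | h
    · have := (vQl₁ a h); omega
    · rw [vQE a (hF1E h)] at hgt; omega
    · rw [vQE a (hF2E h)] at hgt; omega
    · have h1 := (vQl₂ a h).1
      have h2 := (vQl₂ a h).2
      omega
  · obtain ⟨b, hb⟩ := h1
    exact ⟨b, vQE b (hF1E hb), vQ'F₁ b hb⟩
  · obtain ⟨b, hb⟩ := h2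
    exact ⟨b, vQE b (hF2E hb), vQ'F₂ b hb⟩

lemma class_mem_left {l₁ l₂ : List (Finset α)} {E s : Finset α}
    (hv : LV (l₁ ++ E :: l₂)) (hs : s ∈ l₁) :
    ∃ k < l₁.length, classOf (toRank (l₁ ++ E :: l₂)) k = s := by
  obtain ⟨p, q, rfl⟩ := List.append_of_mem hs
  refine ⟨p.length, by simp, ?_⟩
  exact classOf_toRank (l₁ := p) (l₂ := q ++ E :: l₂) hv.pw (by simp)

lemma class_mem_right {l₁ l₂ : List (Finset α)} {E s : Finset α}
    (hv : LV (l₁ ++ E :: l₂)) (hs : s ∈ l₂) :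
    ∃ k, l₁.length < k ∧ classOf (toRank (l₁ ++ E :: l₂)) k = s := by
  obtain ⟨p, q, rfl⟩ := List.append_of_mem hs
  have heq : l₁ ++ E :: (p ++ s :: q) = (l₁ ++ E :: p) ++ s :: q := by simp
  have hlen : (l₁ ++ E :: p).length = l₁.length + 1 + p.length := by simp; omega
  refine ⟨l₁.length + 1 + p.length, by omega, ?_⟩
  rw [← hlen]
  exact classOf_toRank hv.pw heq

theorem split_probs {φ : (α → ℕ) → α → ℝ}
    (hR : SepResponsive φ) (hU : SepUpperInvariant φ) (hLo : SepLowerInvariant φ)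
    (hlot : ∀ R, IsLottery (φ R))
    {l₁ l₂ : List (Finset α)} {E F₁ F₂ : Finset α}
    (hv : LV (l₁ ++ E :: l₂)) (h1 : F₁.Nonempty) (h2 : F₂.Nonempty)
    (hd : Disjoint F₁ F₂) (hu : F₁ ∪ F₂ = E) :
    LV (l₁ ++ F₁ :: F₂ :: l₂) ∧
    (∀ s ∈ l₁ ++ l₂, probOf (φ (toRank (l₁ ++ F₁ :: F₂ :: l₂))) s
        = probOf (φ (toRank (l₁ ++ E :: l₂))) s) ∧
    probOf (φ (toRank (l₁ ++ F₁ :: F₂ :: l₂))) E = probOf (φ (toRank (l₁ ++ E :: l₂))) E ∧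
    probOf (φ (toRank (l₁ ++ F₁ :: F₂ :: l₂))) F₁ ≥ probOf (φ (toRank (l₁ ++ E :: l₂))) F₁ ∧
    probOf (φ (toRank (l₁ ++ F₁ :: F₂ :: l₂))) F₂ ≤ probOf (φ (toRank (l₁ ++ E :: l₂))) F₂ := by
  obtain ⟨hsep, hv'⟩ := sep_of_lists hv h1 h2 hd hu
  set Q := toRank (l₁ ++ E :: l₂) with hQdef
  set Q' := toRank (l₁ ++ F₁ :: F₂ :: l₂) with hQ'def
  have hC1 : ∀ s ∈ l₁ ++ l₂, probOf (φ Q') s = probOf (φ Q) s := by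
    intro s hs
    rcases List.mem_append.1 hs with hs1 | hs2
    · obtain ⟨k, hk, hcl⟩ := class_mem_left hv hs1
      rw [← hcl]
      exact (hU _ _ _ hsep k hk).symm
    · obtain ⟨k, hk, hcl⟩ := class_mem_right hv hs2
      rw [← hcl]
      exact (hLo _ _ _ hsep k hk).symm
  have hEsplit : ∀ y : α → ℝ, probOf y E = probOf y F₁ + probOf y F₂ := by
    intro y
    rw [← hu, probOf_union hd]
  have htot : (List.map (probOf (φ Q)) (l₁ ++ E :: l₂)).sum = 1 := by
    rw [sum_map_probOf hv.pw (S := Finset.univ) (fun a => by simpa using hv.cov a)]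
    exact probOf_univ (hlot Q)
  have htot' : (List.map (probOf (φ Q')) (l₁ ++ F₁ :: F₂ :: l₂)).sum = 1 := by
    rw [sum_map_probOf hv'.pw (S := Finset.univ) (fun a => by simpa using hv'.cov a)]
    exact probOf_univ (hlot Q')
  have hsum1 : (l₁.map (probOf (φ Q'))).sum = (l₁.map (probOf (φ Q))).sum := by
    exact congrArg List.sum (List.map_congr_left (fun s hs => hC1 s (by simp [hs])))
  have hsum2 : (l₂.map (probOf (φ Q'))).sum = (l₂.map (probOf (φ Q))).sum := by
    exact congrArg List.sum (List.map_congr_left (fun s hs => hC1 s (by simp [hs])))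
  have hC2 : probOf (φ Q') E = probOf (φ Q) E := by
    simp only [List.map_append, List.sum_append, List.map_cons, List.sum_cons] at htot htot'
    have hE := hEsplit (φ Q)
    have hE' := hEsplit (φ Q')
    linarith
  have hclF₁ : classOf Q' l₁.length = F₁ := classOf_toRank hv'.pw rfl
  have hclF₂ : classOf Q' (l₁.length + 1) = F₂ := by
    have heq : l₁ ++ F₁ :: F₂ :: l₂ = (l₁ ++ [F₁]) ++ F₂ :: l₂ := by simp
    have hlen : (l₁ ++ [F₁]).length = l₁.length + 1 := by simp
    rw [← hlen]
    exact classOf_toRank hv'.pw heq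
  have hresp := hR _ _ _ hsep
  rw [hclF₁, hclF₂] at hresp
  exact ⟨hv', hC1, hC2, hresp.1, hresp.2⟩

theorem swap_probs {φ : (α → ℕ) → α → ℝ}
    (hR : SepResponsive φ) (hU : SepUpperInvariant φ) (hLo : SepLowerInvariant φ)
    (hlot : ∀ R, IsLottery (φ R))
    {l₁ l₂ : List (Finset α)} {E F : Finset α}
    (hv : LV (l₁ ++ E :: F :: l₂)) :
    LV (l₁ ++ F :: E :: l₂) ∧
    (∀ s ∈ l₁ ++ l₂, probOf (φ (toRank (l₁ ++ F :: E :: l₂))) s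
        = probOf (φ (toRank (l₁ ++ E :: F :: l₂))) s) ∧
    probOf (φ (toRank (l₁ ++ F :: E :: l₂))) F
      ≥ probOf (φ (toRank (l₁ ++ E :: F :: l₂))) F := by
  have hpw := hv.pw
  rw [List.pairwise_append, List.pairwise_cons, List.pairwise_cons] at hpw
  obtain ⟨hpw1, ⟨hEF, hFl₂, hpwl₂⟩, hcross⟩ := hpw
  have hdEF : Disjoint E F := hEF F (by simp)
  have hEne : E.Nonempty := hv.ne E (by simp)
  have hFne : F.Nonempty := hv.ne F (by simp)
  have hvw : LV (l₁ ++ (E ∪ F) :: l₂) := by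
    constructor
    · rw [List.pairwise_append, List.pairwise_cons]
      refine ⟨hpw1, ⟨?_, hpwl₂⟩, ?_⟩
      · intro t ht
        exact Finset.disjoint_union_left.2 ⟨hEF t (by simp [ht]), hFl₂ t ht⟩
      · intro a ha b hb
        rcases List.mem_cons.1 hb with rfl | hb'
        · have d1 := hcross a ha E (by simp)
          have d2 := hcross a ha F (by simp)
          exact Finset.disjoint_union_right.2 ⟨d1, d2⟩
        · exact hcross a ha b (by simp [hb'])
    · intro s hs
      rcases List.mem_append.1 hs with hs1 | hs2
      · exact hv.ne s (by simp [hs1])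
      rcases List.mem_cons.1 hs2 with rfl | hs3
      · exact hEne.mono Finset.subset_union_left
      · exact hv.ne s (by simp [hs3])
    · intro a
      obtain ⟨s, hs, has⟩ := hv.cov a
      rcases List.mem_append.1 hs with hs1 | hs2
      · exact ⟨s, by simp [hs1], has⟩
      rcases List.mem_cons.1 hs2 with h | hs3
      · exact ⟨E ∪ F, by simp, Finset.mem_union_left _ (h ▸ has)⟩
      rcases List.mem_cons.1 hs3 with h | hs4
      · exact ⟨E ∪ F, by simp, Finset.mem_union_right _ (h ▸ has)⟩
      · exact ⟨s, by simp [hs4], has⟩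
  have hA := split_probs hR hU hLo hlot hvw hEne hFne hdEF rfl
  have hB := split_probs hR hU hLo hlot hvw hFne hEne hdEF.symm (Finset.union_comm F E)
  refine ⟨hB.1, ?_, ?_⟩
  · intro s hs
    rw [hB.2.1 s hs, ← hA.2.1 s hs]
  · calc probOf (φ (toRank (l₁ ++ F :: E :: l₂))) F
        ≥ probOf (φ (toRank (l₁ ++ (E ∪ F) :: l₂))) F := hB.2.2.2.1
      _ ≥ probOf (φ (toRank (l₁ ++ E :: F :: l₂))) F := by
          have := hA.2.2.2.2; linarith

def unionList (p : List (Finset α)) : Finset α := p.foldr (· ∪ ·) ∅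

lemma mem_unionList {p : List (Finset α)} {a : α} :
    a ∈ unionList p ↔ ∃ s ∈ p, a ∈ s := by
  induction p with
  | nil => simp [unionList]
  | cons s p ih => simp [unionList, List.foldr_cons, Finset.mem_union]; rw [← unionList]; simp [ih]

theorem refine_probs {φ : (α → ℕ) → α → ℝ}
    (hR : SepResponsive φ) (hU : SepUpperInvariant φ) (hLo : SepLowerInvariant φ)
    (hlot : ∀ R, IsLottery (φ R)) :
    ∀ (p : List (Finset α)) {l₁ l₂ : List (Finset α)} {E : Finset α},
    LV (l₁ ++ E :: l₂) → p ≠ [] → p.Pairwise Disjoint → (∀ s ∈ p, s.Nonempty) →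
    unionList p = E →
    LV (l₁ ++ p ++ l₂) ∧
    probOf (φ (toRank (l₁ ++ p ++ l₂))) E = probOf (φ (toRank (l₁ ++ E :: l₂))) E ∧
    (∀ s ∈ l₁ ++ l₂, probOf (φ (toRank (l₁ ++ p ++ l₂))) s
        = probOf (φ (toRank (l₁ ++ E :: l₂))) s) := by
  intro p
  induction p with
  | nil => intro _ _ _ _ hne _ _ _; exact absurd rfl hne
  | cons x p' ih =>
      intro l₁ l₂ E hv _ hppw hpne hpu
      rcases eq_or_ne p' [] with rfl | hp'ne
      · have hxE : x = E := by
          rw [← hpu]; simp [unionList]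
        subst hxE
        simp only [List.cons_append, List.nil_append, List.singleton_append,
          List.append_assoc]
        refine ⟨by simpa using hv, ?_, ?_⟩ <;> simp
      · have hxne : x.Nonempty := hpne x (by simp)
        have hE'u : x ∪ unionList p' = E := by rw [← hpu]; rfl
        have hE'ne : (unionList p').Nonempty := by
          obtain ⟨s, hs⟩ := List.exists_mem_of_ne_nil p' hp'ne
          obtain ⟨b, hb⟩ := hpne s (by simp [hs])
          exact ⟨b, mem_unionList.2 ⟨s, hs, hb⟩⟩
        have hdx : Disjoint x (unionList p') := by
          rw [Finset.disjoint_right]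
          intro b hb
          obtain ⟨s, hs, hbs⟩ := mem_unionList.1 hb
          exact Finset.disjoint_right.1 ((List.pairwise_cons.1 hppw).1 s hs) hbs
        have step1 := split_probs hR hU hLo hlot hv hxne hE'ne hdx hE'u
        have hv2 : LV ((l₁ ++ [x]) ++ unionList p' :: l₂) := by
          simpa using step1.1
        have step2 := ih (l₁ := l₁ ++ [x]) (l₂ := l₂) hv2 hp'ne
          (List.Pairwise.of_cons hppw) (fun s hs => hpne s (by simp [hs])) rfl
        simp only [List.append_assoc, List.cons_append, List.singleton_append,
          List.nil_append] at step2 ⊢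
        have hxmem : ∀ y : α → ℝ, probOf y E = probOf y x + probOf y (unionList p') := by
          intro y; rw [← hE'u, probOf_union hdx]
        refine ⟨step2.1, ?_, ?_⟩
        · rw [hxmem, step2.2.1, step2.2.2 x (by simp), ← hxmem]
          exact step1.2.2.1
        · intro s hs
          rw [step2.2.2 s (by revert hs; simp; tauto)]
          exact step1.2.1 s hs

def parts (A C : Finset α) : List (Finset α) :=
  if (A ∩ C).Nonempty ∧ (C \ A).Nonempty then [A ∩ C, C \ A] else [C]

lemma parts_union {A C : Finset α} : unionList (parts A C) = C := by
  unfold parts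
  split_ifs with h
  · simp only [unionList, List.foldr]
    ext a
    simp only [Finset.mem_union, Finset.mem_inter, Finset.mem_sdiff, Finset.notMem_empty]
    tauto
  · simp [unionList]

lemma parts_ne {A C : Finset α} : parts A C ≠ [] := by
  unfold parts; split_ifs <;> simp

lemma parts_pw {A C : Finset α} : (parts A C).Pairwise Disjoint := by
  unfold parts; split_ifs with h
  · refine List.pairwise_cons.2 ⟨?_, by simp⟩
    intro t ht
    simp at ht
    subst ht
    rw [Finset.disjoint_left]
    intro b hb
    simp at hb ⊢
    exact fun _ => hb.1
  · simp

lemma parts_nonempty {A C : Finset α} (h : C.Nonempty) : ∀ s ∈ parts A C, s.Nonempty := by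
  unfold parts; split_ifs with hc
  · intro s hs
    rcases List.mem_cons.1 hs with rfl | hs'
    · exact hc.1
    · simp at hs'; subst hs'; exact hc.2
  · intro s hs; simp at hs; subst hs; exact h

lemma parts_pure {A C : Finset α} : ∀ s ∈ parts A C, s ⊆ A ∨ s ∩ A = ∅ := by
  unfold parts; split_ifs with hc
  · intro s hs
    rcases List.mem_cons.1 hs with rfl | hs'
    · exact Or.inl Finset.inter_subset_left
    · simp at hs'; subst hs'
      refine Or.inr ?_
      ext b
      simp only [Finset.mem_inter, Finset.mem_sdiff, Finset.notMem_empty, iff_false, not_and]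
      tauto
  · intro s hs
    simp at hs; subst hs
    rw [not_and_or] at hc
    rcases hc with hc | hc
    · refine Or.inr ?_
      rw [Finset.not_nonempty_iff_eq_empty] at hc
      rw [Finset.inter_comm] at hc
      exact hc
    · refine Or.inl ?_
      rw [Finset.not_nonempty_iff_eq_empty, Finset.sdiff_eq_empty_iff_subset] at hc
      exact hc

lemma parts_self {A C : Finset α} (h : C ⊆ A ∨ C ∩ A = ∅) (hne : C.Nonempty) :
    parts A C = [C] := by
  unfold parts
  rcases h with h | h
  · have : C \ A = ∅ := Finset.sdiff_eq_empty_iff_subset.2 h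
    simp [this]
  · have : A ∩ C = ∅ := by rw [Finset.inter_comm]; exact h
    simp [this]

theorem splitall_probs {φ : (α → ℕ) → α → ℝ}
    (hR : SepResponsive φ) (hU : SepUpperInvariant φ) (hLo : SepLowerInvariant φ)
    (hlot : ∀ R, IsLottery (φ R)) (A : Finset α) :
    ∀ (m l₁ : List (Finset α)), LV (l₁ ++ m) →
    LV (l₁ ++ m.flatMap (parts A)) ∧
    ∀ B, (B ∈ l₁ ∨ (B ∈ m ∧ parts A B = [B])) →
      probOf (φ (toRank (l₁ ++ m.flatMap (parts A)))) B
        = probOf (φ (toRank (l₁ ++ m))) B := by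
  intro m
  induction m with
  | nil => intro l₁ hv; exact ⟨by simpa using hv, fun B _ => rfl⟩
  | cons C m' ih =>
      intro l₁ hv
      have hCne : C.Nonempty := hv.ne C (by simp)
      have step1 := refine_probs hR hU hLo hlot (parts A C) (l₁ := l₁) (l₂ := m')
        hv parts_ne parts_pw (parts_nonempty hCne) parts_union
      have hv2 : LV ((l₁ ++ parts A C) ++ m') := by
        have e : (l₁ ++ parts A C) ++ m' = l₁ ++ parts A C ++ m' := by simp
        rw [e]; exact step1.1
      have step2 := ih (l₁ ++ parts A C) hv2
      have e2 : (l₁ ++ parts A C) ++ m'.flatMap (parts A)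
          = l₁ ++ (C :: m').flatMap (parts A) := by simp
      have e3 : (l₁ ++ parts A C) ++ m' = l₁ ++ parts A C ++ m' := by simp
      rw [e2, e3] at step2
      refine ⟨step2.1, ?_⟩
      intro B hB
      rcases hB with hB | ⟨hBm, hBparts⟩
      · rw [step2.2 B (Or.inl (by simp [hB]))]
        exact step1.2.2 B (by simp [hB])
      · rcases List.mem_cons.1 hBm with rfl | hBm'
        · rw [step2.2 B (Or.inl (by simp [hBparts]))]
          exact step1.2.1
        · rw [step2.2 B (Or.inr ⟨hBm', hBparts⟩)]
          exact step1.2.2 B (by simp [hBm'])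

theorem bubble_probs {φ : (α → ℕ) → α → ℝ}
    (hR : SepResponsive φ) (hU : SepUpperInvariant φ) (hLo : SepLowerInvariant φ)
    (hlot : ∀ R, IsLottery (φ R)) :
    ∀ (Y X l₂ : List (Finset α)) (C : Finset α), LV (X ++ Y ++ C :: l₂) →
    LV (X ++ C :: (Y ++ l₂)) ∧
    probOf (φ (toRank (X ++ C :: (Y ++ l₂)))) C
      ≥ probOf (φ (toRank (X ++ Y ++ C :: l₂))) C ∧
    ∀ B, (B ∈ X ∨ B ∈ l₂) →
      probOf (φ (toRank (X ++ C :: (Y ++ l₂)))) B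
        = probOf (φ (toRank (X ++ Y ++ C :: l₂))) B := by
  intro Y
  induction Y using List.reverseRecOn with
  | nil =>
      intro X l₂ C hv
      exact ⟨by simpa using hv, le_of_eq (by simp), fun B _ => by simp⟩
  | append_singleton Y' y ih =>
      intro X l₂ C hv
      have e1 : X ++ (Y' ++ [y]) ++ C :: l₂ = (X ++ Y') ++ y :: C :: l₂ := by simp
      rw [e1] at hv ⊢
      have sw := swap_probs hR hU hLo hlot (l₁ := X ++ Y') (l₂ := l₂) (E := y) (F := C) hv
      have e2 : (X ++ Y') ++ C :: y :: l₂ = X ++ Y' ++ C :: (y :: l₂) := by simp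
      rw [e2] at sw
      have st := ih X (y :: l₂) C sw.1
      have e3 : X ++ C :: (Y' ++ y :: l₂) = X ++ C :: ((Y' ++ [y]) ++ l₂) := by simp
      rw [e3] at st
      refine ⟨st.1, le_trans sw.2.2 st.2.1, ?_⟩
      · intro B hB
        have hB' : B ∈ X ∨ B ∈ y :: l₂ := by
          rcases hB with h | h
          · exact Or.inl h
          · exact Or.inr (by simp [h])
        rw [st.2.2 B hB']
        exact sw.2.1 B (by rcases hB with h | h <;> simp [h])

theorem sort_probs {φ : (α → ℕ) → α → ℝ}
    (hR : SepResponsive φ) (hU : SepUpperInvariant φ) (hLo : SepLowerInvariant φ)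
    (hlot : ∀ R, IsLottery (φ R)) (A : Finset α) :
    ∀ (m X Y : List (Finset α)), LV (X ++ Y ++ m) →
    LV (X ++ (m.filter (fun s => decide (s ⊆ A)) ++ (Y ++ m.filter (fun s => !decide (s ⊆ A))))) ∧
    (∀ B ∈ X, probOf (φ (toRank (X ++ (m.filter (fun s => decide (s ⊆ A)) ++ (Y ++ m.filter (fun s => !decide (s ⊆ A))))))) B
        = probOf (φ (toRank (X ++ Y ++ m))) B) ∧
    (∀ B ∈ m, B ⊆ A →
      probOf (φ (toRank (X ++ (m.filter (fun s => decide (s ⊆ A)) ++ (Y ++ m.filter (fun s => !decide (s ⊆ A))))))) B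
        ≥ probOf (φ (toRank (X ++ Y ++ m))) B) := by
  intro m
  induction m with
  | nil =>
      intro X Y hv
      refine ⟨by simpa using hv, fun B _ => by simp, fun B hB => by simp at hB⟩
  | cons C m' ih =>
      intro X Y hv
      by_cases hCA : C ⊆ A
      · have hf1 : (C :: m').filter (fun s => decide (s ⊆ A))
            = C :: m'.filter (fun s => decide (s ⊆ A)) := by simp [hCA]
        have hf2 : (C :: m').filter (fun s => !decide (s ⊆ A))
            = m'.filter (fun s => !decide (s ⊆ A)) := by simp [hCA]
        rw [hf1, hf2]
        have bub := bubble_probs hR hU hLo hlot Y X m' C hv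
        have hv2 : LV ((X ++ [C]) ++ Y ++ m') := by
          have e : (X ++ [C]) ++ Y ++ m' = X ++ C :: (Y ++ m') := by simp
          rw [e]; exact bub.1
        have st := ih (X ++ [C]) Y hv2
        have e2 : (X ++ [C]) ++ (m'.filter (fun s => decide (s ⊆ A)) ++ (Y ++ m'.filter (fun s => !decide (s ⊆ A))))
            = X ++ (C :: m'.filter (fun s => decide (s ⊆ A)) ++ (Y ++ m'.filter (fun s => !decide (s ⊆ A)))) := by simp
        have e3 : (X ++ [C]) ++ Y ++ m' = X ++ C :: (Y ++ m') := by simp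
        rw [e2, e3] at st
        refine ⟨st.1, ?_, ?_⟩
        · intro B hB
          rw [st.2.1 B (by simp [hB])]
          exact bub.2.2 B (Or.inl hB)
        · intro B hB hBA
          rcases List.mem_cons.1 hB with rfl | hB'
          · calc probOf (φ (toRank (X ++ (B :: m'.filter (fun s => decide (s ⊆ A)) ++ (Y ++ m'.filter (fun s => !decide (s ⊆ A))))))) B
                = probOf (φ (toRank (X ++ B :: (Y ++ m')))) B := st.2.1 B (by simp)
              _ ≥ probOf (φ (toRank (X ++ Y ++ B :: m'))) B := bub.2.1
          · calc probOf (φ (toRank (X ++ (C :: m'.filter (fun s => decide (s ⊆ A)) ++ (Y ++ m'.filter (fun s => !decide (s ⊆ A))))))) B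
                ≥ probOf (φ (toRank (X ++ C :: (Y ++ m')))) B := st.2.2 B hB' hBA
              _ = probOf (φ (toRank (X ++ Y ++ C :: m'))) B := bub.2.2 B (Or.inr hB')
      · have hf1 : (C :: m').filter (fun s => decide (s ⊆ A))
            = m'.filter (fun s => decide (s ⊆ A)) := by simp [hCA]
        have hf2 : (C :: m').filter (fun s => !decide (s ⊆ A))
            = C :: m'.filter (fun s => !decide (s ⊆ A)) := by simp [hCA]
        rw [hf1, hf2]
        have hv2 : LV (X ++ (Y ++ [C]) ++ m') := by
          have e : X ++ (Y ++ [C]) ++ m' = X ++ Y ++ C :: m' := by simp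
          rw [e]; exact hv
        have st := ih X (Y ++ [C]) hv2
        have e2 : X ++ (m'.filter (fun s => decide (s ⊆ A)) ++ ((Y ++ [C]) ++ m'.filter (fun s => !decide (s ⊆ A))))
            = X ++ (m'.filter (fun s => decide (s ⊆ A)) ++ (Y ++ C :: m'.filter (fun s => !decide (s ⊆ A)))) := by simp
        have e3 : X ++ (Y ++ [C]) ++ m' = X ++ Y ++ C :: m' := by simp
        rw [e2, e3] at st
        refine ⟨st.1, st.2.1, ?_⟩
        intro B hB hBA
        rcases List.mem_cons.1 hB with rfl | hB'
        · exact absurd hBA hCA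
        · exact st.2.2 B hB' hBA

lemma classOf_disjoint {R : α → ℕ} {i j : ℕ} (h : i ≠ j) :
    Disjoint (classOf R i) (classOf R j) := by
  rw [Finset.disjoint_left]
  intro b hb hb'
  rw [mem_classOf] at hb hb'
  omega

lemma listOf_split {R : α → ℕ} (hcan : Canonical R) (a0 : α) (t : ℕ)
    (hne2 : (Finset.univ \ Finset.univ.filter (fun j => R j ≤ t)).Nonempty) :
    ∃ LA LN : List (Finset α),
      LV (LA ++ LN) ∧ toRank (LA ++ LN) = R ∧
      unionList LA = Finset.univ.filter (fun j => R j ≤ t) ∧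
      unionList LN = Finset.univ \ Finset.univ.filter (fun j => R j ≤ t) ∧
      LA ≠ [] ∧ LN ≠ [] ∧
      LA.Pairwise Disjoint ∧ (∀ s ∈ LA, s.Nonempty) ∧
      LN.Pairwise Disjoint ∧ (∀ s ∈ LN, s.Nonempty) := by
  set K := Finset.univ.sup R with hK
  have hleK : ∀ b, R b ≤ K := fun b => Finset.le_sup (Finset.mem_univ b)
  have hKex : ∃ b, R b = K := by
    obtain ⟨b, -, hb⟩ := Finset.exists_mem_eq_sup Finset.univ ⟨a0, Finset.mem_univ a0⟩ R
    exact ⟨b, hb.symm⟩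
  have hclne : ∀ k ≤ K, (classOf R k).Nonempty := by
    intro k hk
    obtain ⟨b, hb⟩ := hKex
    obtain ⟨c, hc⟩ := hcan b k (by omega)
    exact ⟨c, mem_classOf.2 hc⟩
  have htK : t < K := by
    obtain ⟨j, hj⟩ := hne2
    simp at hj
    have := hleK j
    omega
  refine ⟨(List.range (t+1)).map (classOf R),
          (List.range' (t+1) (K-t)).map (classOf R), ?_⟩
  have happ : (List.range (t+1)).map (classOf R) ++ (List.range' (t+1) (K-t)).map (classOf R)
      = (List.range (K+1)).map (classOf R) := by
    rw [← List.map_append]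
    congr 1
    rw [List.range_eq_range', List.range_eq_range']
    have := List.range'_append (s := 0) (m := t+1) (n := K-t) (step := 1)
    simp at this
    rw [this]
    congr 1
    omega
  have hnodup : (List.range (K+1)).Nodup := List.nodup_range
  have hpwK : ((List.range (K+1)).map (classOf R)).Pairwise Disjoint := by
    exact List.Pairwise.map _ (fun a b h => classOf_disjoint h) hnodup
  have hneK : ∀ s ∈ (List.range (K+1)).map (classOf R), s.Nonempty := by
    intro s hs
    obtain ⟨k, hk, rfl⟩ := List.mem_map.1 hs
    exact hclne k (by simp at hk; omega)
  have hcov : ∀ a : α, ∃ s ∈ (List.range (K+1)).map (classOf R), a ∈ s := by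
    intro a
    exact ⟨classOf R (R a), List.mem_map.2 ⟨R a, by simp; exact hleK a, rfl⟩,
      mem_classOf.2 rfl⟩
  have hLV : LV ((List.range (K+1)).map (classOf R)) := ⟨hpwK, hneK, hcov⟩
  have htr : toRank ((List.range (K+1)).map (classOf R)) = R := by
    funext x
    have hdec : List.range (K+1)
        = List.range' 0 (R x) ++ R x :: List.range' (R x + 1) (K - R x) := by
      rw [List.range_eq_range']
      have h1 : R x :: List.range' (R x + 1) (K - R x) = List.range' (R x) (K - R x + 1) := by
        rw [List.range'_succ]
      rw [h1]
      have := List.range'_append (s := 0) (m := R x) (n := K - R x + 1) (step := 1)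
      simp at this
      rw [this]
      congr 1
      have := hleK x
      omega
    have hdec2 : (List.range (K+1)).map (classOf R)
        = (List.range' 0 (R x)).map (classOf R)
          ++ classOf R (R x) :: (List.range' (R x + 1) (K - R x)).map (classOf R) := by
      rw [hdec]; simp
    have hcl := classOf_toRank hpwK hdec2
    have hx : x ∈ classOf (toRank ((List.range (K+1)).map (classOf R)))
        ((List.range' 0 (R x)).map (classOf R)).length := by
      rw [hcl]; exact mem_classOf.2 rfl
    rw [mem_classOf] at hx
    simpa using hx
  rw [happ]
  refine ⟨hLV, htr, ?_, ?_, by simp, ?_, ?_, ?_, ?_, ?_⟩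
  · ext a
    rw [mem_unionList]
    simp only [List.mem_map, List.mem_range, Finset.mem_filter, Finset.mem_univ, true_and]
    constructor
    · rintro ⟨s, ⟨k, hk, rfl⟩, ha⟩
      rw [mem_classOf] at ha; omega
    · intro h
      exact ⟨classOf R (R a), ⟨R a, by omega, rfl⟩, mem_classOf.2 rfl⟩
  · ext a
    rw [mem_unionList]
    simp only [List.mem_map, List.mem_range'_1, Finset.mem_sdiff, Finset.mem_filter,
      Finset.mem_univ, true_and]
    constructor
    · rintro ⟨s, ⟨k, hk, rfl⟩, ha⟩
      rw [mem_classOf] at ha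
      omega
    · intro h
      have := hleK a
      exact ⟨classOf R (R a), ⟨R a, by omega, rfl⟩, mem_classOf.2 rfl⟩
  · simp; omega
  · exact List.Pairwise.map _ (fun a b h => classOf_disjoint h) (List.nodup_range)
  · intro s hs
    obtain ⟨k, hk, rfl⟩ := List.mem_map.1 hs
    exact hclne k (by simp at hk; omega)
  · exact List.Pairwise.map _ (fun a b h => classOf_disjoint h) (List.nodup_range')
  · intro s hs
    obtain ⟨k, hk, rfl⟩ := List.mem_map.1 hs
    rw [List.mem_range'_1] at hk
    exact hclne k (by omega)

lemma list_sum_le {β : Type*} {l : List β} {f g : β → ℝ} (h : ∀ b ∈ l, f b ≤ g b) :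
    (l.map f).sum ≤ (l.map g).sum := by
  induction l with
  | nil => simp
  | cons b l ih =>
      simp only [List.map_cons, List.sum_cons]
      exact add_le_add (h b (by simp)) (ih (fun c hc => h c (by simp [hc])))

lemma probOf_compl {x : α → ℝ} (h : IsLottery x) (A : Finset α) :
    probOf x A + probOf x (Finset.univ \ A) = 1 := by
  rw [← probOf_union Finset.disjoint_sdiff,
    Finset.union_sdiff_of_subset (Finset.subset_univ A)]
  exact probOf_univ h

lemma sum_inter_parts {x : α → ℝ} {l : List (Finset α)} (hpw : l.Pairwise Disjoint)
    {A : Finset α} (hcov : ∀ a ∈ A, ∃ s ∈ l, a ∈ s) :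
    (l.map (fun C => probOf x (A ∩ C))).sum = probOf x A := by
  have h1 : l.map (fun C => probOf x (A ∩ C)) = (l.map (fun C => A ∩ C)).map (probOf x) := by
    rw [List.map_map]; rfl
  rw [h1]
  apply sum_map_probOf
  · exact List.Pairwise.map _
      (fun a b h => Finset.disjoint_of_subset_left Finset.inter_subset_right
        (Finset.disjoint_of_subset_right Finset.inter_subset_right h)) hpw
  · intro a
    constructor
    · intro ha
      obtain ⟨s, hs, has⟩ := hcov a ha
      exact ⟨A ∩ s, List.mem_map.2 ⟨s, hs, rfl⟩, Finset.mem_inter.2 ⟨ha, has⟩⟩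
    · rintro ⟨s, hs, has⟩
      obtain ⟨C, hC, rfl⟩ := List.mem_map.1 hs
      exact (Finset.mem_inter.1 has).1

lemma listOf_full {R : α → ℕ} (hcan : Canonical R) (a0 : α) :
    ∃ l : List (Finset α), LV l ∧ toRank l = R := by
  set K := Finset.univ.sup R with hK
  have hleK : ∀ b, R b ≤ K := fun b => Finset.le_sup (Finset.mem_univ b)
  have hKex : ∃ b, R b = K := by
    obtain ⟨b, -, hb⟩ := Finset.exists_mem_eq_sup Finset.univ ⟨a0, Finset.mem_univ a0⟩ R
    exact ⟨b, hb.symm⟩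
  have hclne : ∀ k ≤ K, (classOf R k).Nonempty := by
    intro k hk
    obtain ⟨b, hb⟩ := hKex
    obtain ⟨c, hc⟩ := hcan b k (by omega)
    exact ⟨c, mem_classOf.2 hc⟩
  refine ⟨(List.range (K+1)).map (classOf R), ⟨?_, ?_, ?_⟩, ?_⟩
  · exact List.Pairwise.map _ (fun a b h => classOf_disjoint h) (List.nodup_range)
  · intro s hs
    obtain ⟨k, hk, rfl⟩ := List.mem_map.1 hs
    exact hclne k (by simp at hk; omega)
  · intro a
    exact ⟨classOf R (R a), List.mem_map.2 ⟨R a, by simp; exact hleK a, rfl⟩,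
      mem_classOf.2 rfl⟩
  · funext x
    have hpwK : ((List.range (K+1)).map (classOf R)).Pairwise Disjoint :=
      List.Pairwise.map _ (fun a b h => classOf_disjoint h) (List.nodup_range)
    have hdec : List.range (K+1)
        = List.range' 0 (R x) ++ R x :: List.range' (R x + 1) (K - R x) := by
      rw [List.range_eq_range']
      have h1 : R x :: List.range' (R x + 1) (K - R x) = List.range' (R x) (K - R x + 1) := by
        rw [List.range'_succ]
      rw [h1]
      have := List.range'_append (s := 0) (m := R x) (n := K - R x + 1) (step := 1)
      simp at this
      rw [this]
      congr 1
      have := hleK x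
      omega
    have hdec2 : (List.range (K+1)).map (classOf R)
        = (List.range' 0 (R x)).map (classOf R)
          ++ classOf R (R x) :: (List.range' (R x + 1) (K - R x)).map (classOf R) := by
      rw [hdec]; simp
    have hcl := classOf_toRank hpwK hdec2
    have hx : x ∈ classOf (toRank ((List.range (K+1)).map (classOf R)))
        ((List.range' 0 (R x)).map (classOf R)).length := by
      rw [hcl]; exact mem_classOf.2 rfl
    rw [mem_classOf] at hx
    simpa using hx

theorem two_class_eq {φ : (α → ℕ) → α → ℝ}
    (hR : SepResponsive φ) (hU : SepUpperInvariant φ) (hLo : SepLowerInvariant φ)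
    (hlot : ∀ R, IsLottery (φ R)) {R : α → ℕ} (hcan : Canonical R) (a0 : α)
    (hne2 : (Finset.univ \ Finset.univ.filter (fun j => R j ≤ R a0)).Nonempty) :
    probOf (φ R) (Finset.univ.filter (fun j => R j ≤ R a0))
      = probOf (φ (toRank [Finset.univ.filter (fun j => R j ≤ R a0),
          Finset.univ \ Finset.univ.filter (fun j => R j ≤ R a0)]))
          (Finset.univ.filter (fun j => R j ≤ R a0)) := by
  obtain ⟨LA, LN, hLV, htr, huA, huN, hAne, hNne, hApw, hAne', hNpw, hNne'⟩ :=
    listOf_split hcan a0 (R a0) hne2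
  set A := Finset.univ.filter (fun j => R j ≤ R a0) with hAdef
  set Ac := Finset.univ \ A with hAcdef
  have hdAc : Disjoint A Ac := Finset.disjoint_sdiff
  have hvQA : LV [A, Ac] := by
    refine ⟨?_, ?_, ?_⟩
    · exact List.pairwise_cons.2 ⟨by intro t ht; simp at ht; subst ht; exact hdAc, by simp⟩
    · intro s hs
      simp at hs
      rcases hs with rfl | rfl
      · exact ⟨a0, by simp [hAdef]⟩
      · exact hne2
    · intro a
      by_cases ha : a ∈ A
      · exact ⟨A, by simp, ha⟩
      · exact ⟨Ac, by simp, by simp [hAcdef, ha]⟩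
  have step1 := refine_probs hR hU hLo hlot LA (l₁ := ([] : List (Finset α))) (l₂ := [Ac])
    (E := A) hvQA hAne hApw hAne' huA
  simp only [List.nil_append] at step1
  have step2 := refine_probs hR hU hLo hlot LN (l₁ := LA) (l₂ := ([] : List (Finset α)))
    (E := Ac) step1.1 hNne hNpw hNne' huN
  simp only [List.append_nil] at step2
  have hAc1 : probOf (φ (toRank (LA ++ LN))) Ac = probOf (φ (toRank (LA ++ [Ac]))) Ac :=
    step2.2.1
  have hAc2 : probOf (φ (toRank (LA ++ [Ac]))) Ac = probOf (φ (toRank [A, Ac])) Ac :=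
    step1.2.2 Ac (by simp)
  have hAc : probOf (φ R) Ac = probOf (φ (toRank [A, Ac])) Ac := by
    rw [← htr, hAc1, hAc2]
  have h1 := probOf_compl (hlot R) A
  have h2 := probOf_compl (hlot (toRank [A, Ac])) A
  rw [← hAcdef] at h1 h2
  linarith

theorem upper_bound_two_class {φ : (α → ℕ) → α → ℝ}
    (hR : SepResponsive φ) (hU : SepUpperInvariant φ) (hLo : SepLowerInvariant φ)
    (hlot : ∀ R, IsLottery (φ R)) {R' : α → ℕ} (hcan' : Canonical R')
    {A : Finset α} (hAne : A.Nonempty) (hAcne : (Finset.univ \ A).Nonempty) (a0 : α) :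
    probOf (φ R') A ≤ probOf (φ (toRank [A, Finset.univ \ A])) A := by
  obtain ⟨l', hvl', htr'⟩ := listOf_full hcan' a0
  set Ac := Finset.univ \ A with hAcdef
  set I := l'.flatMap (parts A) with hIdef
  have sa := splitall_probs hR hU hLo hlot A l' ([] : List (Finset α)) (by simpa using hvl')
  simp only [List.nil_append] at sa
  have hvI : LV I := sa.1
  have hpure : ∀ s ∈ I, s ⊆ A ∨ s ∩ A = ∅ := by
    intro s hs
    obtain ⟨C, hC, hsC⟩ := List.mem_flatMap.1 hs
    exact parts_pure s hsC
  have so := sort_probs hR hU hLo hlot A I ([] : List (Finset α)) ([] : List (Finset α))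
    (by simpa using hvI)
  simp only [List.nil_append] at so
  set IA := I.filter (fun s => decide (s ⊆ A)) with hIAdef
  set IN := I.filter (fun s => !decide (s ⊆ A)) with hINdef
  have key : ∀ C ∈ l', probOf (φ (toRank l')) (A ∩ C)
      ≤ probOf (φ (toRank (IA ++ IN))) (A ∩ C) := by
    intro C hC
    by_cases hACne : (A ∩ C).Nonempty
    · have hmemI : A ∩ C ∈ I := by
        apply List.mem_flatMap.2
        refine ⟨C, hC, ?_⟩
        by_cases hmix : (C \ A).Nonempty
        · unfold parts
          rw [if_pos ⟨hACne, hmix⟩]; simp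
        · have hsub : C ⊆ A := by
            rw [Finset.not_nonempty_iff_eq_empty, Finset.sdiff_eq_empty_iff_subset] at hmix
            exact hmix
          have hACeq : A ∩ C = C := Finset.inter_eq_right.2 hsub
          rw [hACeq, parts_self (Or.inl hsub) (hvl'.ne C hC)]
          simp
      have hIle : probOf (φ (toRank l')) (A ∩ C) ≤ probOf (φ (toRank I)) (A ∩ C) := by
        by_cases hmix : (C \ A).Nonempty
        · obtain ⟨p, q, hl'⟩ := List.append_of_mem hC
          have hdisj : Disjoint (A ∩ C) (C \ A) := by
            rw [Finset.disjoint_left]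
            intro b hb hb'
            simp at hb hb'
            exact hb'.2 hb.1
          have hun : (A ∩ C) ∪ (C \ A) = C := by
            ext b
            simp only [Finset.mem_union, Finset.mem_inter, Finset.mem_sdiff]
            tauto
          have hv' : LV (p ++ C :: q) := hl' ▸ hvl'
          have sp := split_probs hR hU hLo hlot hv' hACne hmix hdisj hun
          have sa2 := splitall_probs hR hU hLo hlot A (p ++ (A ∩ C) :: (C \ A) :: q)
            ([] : List (Finset α)) (by simpa using sp.1)
          simp only [List.nil_append] at sa2
          have hfm : (p ++ (A ∩ C) :: (C \ A) :: q).flatMap (parts A) = I := by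
            rw [hIdef, hl']
            simp only [List.flatMap_append, List.flatMap_cons]
            rw [parts_self (Or.inl Finset.inter_subset_left) hACne,
              parts_self (Or.inr (by ext b; simp only [Finset.mem_inter, Finset.mem_sdiff,
                Finset.notMem_empty, iff_false, not_and]; tauto)) hmix]
            have hpc : parts A C = [A ∩ C, C \ A] := by
              unfold parts; rw [if_pos ⟨hACne, hmix⟩]
            rw [hpc]
            simp
          have pieceeq : probOf (φ (toRank (p ++ (A ∩ C) :: (C \ A) :: q))) (A ∩ C)
              = probOf (φ (toRank I)) (A ∩ C) := by
            rw [← hfm]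
            exact (sa2.2 (A ∩ C) (Or.inr ⟨by simp,
              parts_self (Or.inl Finset.inter_subset_left) hACne⟩)).symm
          calc probOf (φ (toRank l')) (A ∩ C)
              = probOf (φ (toRank (p ++ C :: q))) (A ∩ C) := by rw [hl']
            _ ≤ probOf (φ (toRank (p ++ (A ∩ C) :: (C \ A) :: q))) (A ∩ C) := sp.2.2.2.1
            _ = probOf (φ (toRank I)) (A ∩ C) := pieceeq
        · have hsub : C ⊆ A := by
            rw [Finset.not_nonempty_iff_eq_empty, Finset.sdiff_eq_empty_iff_subset] at hmix
            exact hmix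
          have hACeq : A ∩ C = C := Finset.inter_eq_right.2 hsub
          rw [hACeq]
          exact le_of_eq (sa.2 C (Or.inr ⟨hC, parts_self (Or.inl hsub) (hvl'.ne C hC)⟩)).symm
      exact le_trans hIle (so.2.2 (A ∩ C) hmemI Finset.inter_subset_left)
    · rw [Finset.not_nonempty_iff_eq_empty] at hACne
      rw [hACne]
      simp [probOf]
  have hsum1 : (l'.map (fun C => probOf (φ (toRank l')) (A ∩ C))).sum
      = probOf (φ (toRank l')) A :=
    sum_inter_parts hvl'.pw (fun a _ => hvl'.cov a)
  have hsum2 : (l'.map (fun C => probOf (φ (toRank (IA ++ IN))) (A ∩ C))).sum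
      = probOf (φ (toRank (IA ++ IN))) A :=
    sum_inter_parts hvl'.pw (fun a _ => hvl'.cov a)
  have hle : probOf (φ (toRank l')) A ≤ probOf (φ (toRank (IA ++ IN))) A := by
    rw [← hsum1, ← hsum2]
    exact list_sum_le key
  have hIAprop : ∀ s ∈ IA, s ⊆ A := by
    intro s hs
    have := List.mem_filter.1 hs
    simpa using this.2
  have hINprop : ∀ s ∈ IN, s ∩ A = ∅ := by
    intro s hs
    have h := List.mem_filter.1 hs
    have hns : ¬ s ⊆ A := by simpa using h.2
    rcases hpure s h.1 with h' | h'
    · exact absurd h' hns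
    · exact h'
  have huIA : unionList IA = A := by
    ext b
    rw [mem_unionList]
    constructor
    · rintro ⟨s, hs, hbs⟩
      exact hIAprop s hs hbs
    · intro hb
      obtain ⟨s, hs, hbs⟩ := hvI.cov b
      have hsubA : s ⊆ A := by
        rcases hpure s hs with h' | h'
        · exact h'
        · exfalso
          have : b ∈ s ∩ A := Finset.mem_inter.2 ⟨hbs, hb⟩
          rw [h'] at this
          simp at this
      exact ⟨s, List.mem_filter.2 ⟨hs, by simpa⟩, hbs⟩
  have huIN : unionList IN = Ac := by
    ext b
    rw [mem_unionList]
    constructor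
    · rintro ⟨s, hs, hbs⟩
      have h' := hINprop s hs
      have hbA : b ∉ A := by
        intro hbA
        have : b ∈ s ∩ A := Finset.mem_inter.2 ⟨hbs, hbA⟩
        rw [h'] at this
        simp at this
      simp [hAcdef, hbA]
    · intro hb
      have hbA : b ∉ A := by
        rw [hAcdef] at hb
        simp at hb
        exact hb
      obtain ⟨s, hs, hbs⟩ := hvI.cov b
      have hns : ¬ s ⊆ A := fun hsub => hbA (hsub hbs)
      exact ⟨s, List.mem_filter.2 ⟨hs, by simpa⟩, hbs⟩
  have hIAne : IA ≠ [] := by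
    obtain ⟨b, hb⟩ := hAne
    have : b ∈ unionList IA := huIA ▸ hb
    obtain ⟨s, hs, -⟩ := mem_unionList.1 this
    exact List.ne_nil_of_mem hs
  have hINne : IN ≠ [] := by
    obtain ⟨b, hb⟩ := hAcne
    have : b ∈ unionList IN := huIN ▸ hb
    obtain ⟨s, hs, -⟩ := mem_unionList.1 this
    exact List.ne_nil_of_mem hs
  have hIApw : IA.Pairwise Disjoint := hvI.pw.sublist (List.filter_sublist)
  have hINpw : IN.Pairwise Disjoint := hvI.pw.sublist (List.filter_sublist)
  have hIAne' : ∀ s ∈ IA, s.Nonempty := fun s hs => hvI.ne s (List.mem_filter.1 hs).1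
  have hINne' : ∀ s ∈ IN, s.Nonempty := fun s hs => hvI.ne s (List.mem_filter.1 hs).1
  have hdAc : Disjoint A Ac := Finset.disjoint_sdiff
  have hvQA : LV [A, Ac] := by
    refine ⟨?_, ?_, ?_⟩
    · exact List.pairwise_cons.2 ⟨by intro t ht; simp at ht; subst ht; exact hdAc, by simp⟩
    · intro s hs
      simp at hs
      rcases hs with rfl | rfl
      · exact hAne
      · exact hAcne
    · intro a
      by_cases ha : a ∈ A
      · exact ⟨A, by simp, ha⟩
      · exact ⟨Ac, by simp, by simp [hAcdef, ha]⟩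
  have step1 := refine_probs hR hU hLo hlot IA (l₁ := ([] : List (Finset α))) (l₂ := [Ac])
    (E := A) hvQA hIAne hIApw hIAne' huIA
  simp only [List.nil_append] at step1
  have step2 := refine_probs hR hU hLo hlot IN (l₁ := IA) (l₂ := ([] : List (Finset α)))
    (E := Ac) step1.1 hINne hINpw hINne' huIN
  simp only [List.append_nil] at step2
  have hAc1 : probOf (φ (toRank (IA ++ IN))) Ac = probOf (φ (toRank (IA ++ [Ac]))) Ac :=
    step2.2.1
  have hAc2 : probOf (φ (toRank (IA ++ [Ac]))) Ac = probOf (φ (toRank [A, Ac])) Ac :=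
    step1.2.2 Ac (by simp)
  have h1 := probOf_compl (hlot (toRank (IA ++ IN))) A
  have h2 := probOf_compl (hlot (toRank [A, Ac])) A
  rw [← hAcdef] at h1 h2
  have hfinal : probOf (φ (toRank (IA ++ IN))) A = probOf (φ (toRank [A, Ac])) A := by
    linarith [hAc1, hAc2]
  rw [← htr']
  rw [hfinal] at hle
  exact hle

lemma canonical_of_sep {Q Q' : α → ℕ} {κ : ℕ} (hsep : IsSeparation Q Q' κ) :
    Canonical Q' := by
  obtain ⟨hcan, hlt, heq, hgt, ⟨w1, hw1, hw1'⟩, ⟨w2, hw2, hw2'⟩⟩ := hsep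
  have hmono : ∀ b, Q b ≤ Q' b ∧ Q' b ≤ Q b + 1 := by
    intro b
    rcases lt_trichotomy (Q b) κ with h | h | h
    · rw [hlt b h]; omega
    · rcases heq b h with h' | h' <;> omega
    · rw [hgt b h]; omega
  intro a k hk
  rcases lt_trichotomy k κ with h | h | h
  · obtain ⟨b, hb⟩ := hcan w1 k (by omega)
    exact ⟨b, by rw [hlt b (by omega)]; exact hb⟩
  · exact ⟨w1, by omega⟩
  · rcases Nat.eq_or_lt_of_le h with h' | h'
    · exact ⟨w2, by omega⟩
    · have hk1 : k - 1 ≤ Q a := by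
        have := (hmono a).2
        omega
      obtain ⟨b, hb⟩ := hcan a (k-1) hk1
      have hbκ : κ < Q b := by omega
      exact ⟨b, by rw [hgt b hbκ]; omega⟩

lemma forward_all {φ : (α → ℕ) → α → ℝ} (hlot : ∀ R, IsLottery (φ R))
    (hSP : Strategyproof φ) {Q Q' : α → ℕ} {κ : ℕ} (sep : IsSeparation Q Q' κ) :
    (∀ k, probOf (φ Q) (classOf Q k) = probOf (φ Q') (classOf Q k)) ∧
    probOf (φ Q') (classOf Q' κ) ≥ probOf (φ Q) (classOf Q' κ) ∧
    probOf (φ Q') (classOf Q' (κ+1)) ≤ probOf (φ Q) (classOf Q' (κ+1)) := by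
  have hcanQ := sep.1
  have hcanQ' := canonical_of_sep sep
  have h1 := hSP Q Q' hcanQ hcanQ'
  have h2 := hSP Q' Q hcanQ' hcanQ
  have hrel : ∀ j, (Q' j = Q j ∧ Q j < κ) ∨ (Q j = κ ∧ (Q' j = κ ∨ Q' j = κ + 1)) ∨
      (Q' j = Q j + 1 ∧ κ < Q j) := by
    intro j
    rcases lt_trichotomy (Q j) κ with h | h | h
    · exact Or.inl ⟨sep.2.1 j h, h⟩
    · exact Or.inr (Or.inl ⟨h, sep.2.2.1 j h⟩)
    · exact Or.inr (Or.inr ⟨sep.2.2.2.1 j h, h⟩)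
  have I1 : ∀ k < κ, Finset.univ.filter (fun j => Q j ≤ k)
      = Finset.univ.filter (fun j => Q' j ≤ k) := by
    intro k hk
    ext j
    simp only [Finset.mem_filter, Finset.mem_univ, true_and]
    rcases hrel j with ⟨h1', h2'⟩ | ⟨h1', h2'⟩ | ⟨h1', h2'⟩ <;> omega
  have I2 : Finset.univ.filter (fun j => Q j ≤ κ)
      = Finset.univ.filter (fun j => Q' j ≤ κ + 1) := by
    ext j
    simp only [Finset.mem_filter, Finset.mem_univ, true_and]
    rcases hrel j with ⟨h1', h2'⟩ | ⟨h1', h2'⟩ | ⟨h1', h2'⟩ <;> omega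
  have I3 : ∀ k, κ < k → Finset.univ.filter (fun j => Q j ≤ k)
      = Finset.univ.filter (fun j => Q' j ≤ k + 1) := by
    intro k hk
    ext j
    simp only [Finset.mem_filter, Finset.mem_univ, true_and]
    rcases hrel j with ⟨h1', h2'⟩ | ⟨h1', h2'⟩ | ⟨h1', h2'⟩ <;> omega
  have G1 : ∀ k, probOf (φ Q) (Finset.univ.filter (fun j => Q j ≤ k))
      ≥ probOf (φ Q') (Finset.univ.filter (fun j => Q j ≤ k)) := by
    intro k
    by_cases hex : ∃ b, k ≤ Q b
    · obtain ⟨b, hb⟩ := hex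
      obtain ⟨c, hc⟩ := hcanQ b k hb
      have := h1 c
      rw [hc] at this
      exact this
    · push_neg at hex
      have huniv : Finset.univ.filter (fun j => Q j ≤ k) = Finset.univ := by
        ext j
        simp only [Finset.mem_filter, Finset.mem_univ, true_and, iff_true]
        exact le_of_lt (hex j)
      rw [huniv, probOf_univ (hlot Q), probOf_univ (hlot Q')]
  have G2 : ∀ k, probOf (φ Q') (Finset.univ.filter (fun j => Q' j ≤ k))
      ≥ probOf (φ Q) (Finset.univ.filter (fun j => Q' j ≤ k)) := by
    intro k
    by_cases hex : ∃ b, k ≤ Q' b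
    · obtain ⟨b, hb⟩ := hex
      obtain ⟨c, hc⟩ := hcanQ' b k hb
      have := h2 c
      rw [hc] at this
      exact this
    · push_neg at hex
      have huniv : Finset.univ.filter (fun j => Q' j ≤ k) = Finset.univ := by
        ext j
        simp only [Finset.mem_filter, Finset.mem_univ, true_and, iff_true]
        exact le_of_lt (hex j)
      rw [huniv, probOf_univ (hlot Q), probOf_univ (hlot Q')]
  have E : ∀ k, probOf (φ Q) (Finset.univ.filter (fun j => Q j ≤ k))
      = probOf (φ Q') (Finset.univ.filter (fun j => Q j ≤ k)) := by
    intro k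
    rcases lt_trichotomy k κ with h | h | h
    · have := G2 k
      rw [← I1 k h] at this
      have := G1 k
      linarith [G2 k, (I1 k h) ▸ G2 k]
    · subst h
      have hg2 := G2 (k+1)
      rw [← I2] at hg2
      linarith [G1 k]
    · have hg2 := G2 (k+1)
      rw [← I3 k h] at hg2
      linarith [G1 k]
  have ClassDiff : ∀ (x : α → ℝ) (S : α → ℕ) (k : ℕ),
      probOf x (Finset.univ.filter (fun j => S j ≤ k + 1))
        = probOf x (Finset.univ.filter (fun j => S j ≤ k)) + probOf x (classOf S (k+1)) := by
    intro x S k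
    have hsplit : Finset.univ.filter (fun j => S j ≤ k + 1)
        = Finset.univ.filter (fun j => S j ≤ k) ∪ classOf S (k+1) := by
      ext j
      simp only [classOf, Finset.mem_filter, Finset.mem_univ, true_and, Finset.mem_union]
      omega
    rw [hsplit, probOf_union]
    rw [Finset.disjoint_left]
    intro j hj hj'
    simp only [Finset.mem_filter, Finset.mem_univ, true_and] at hj
    rw [mem_classOf] at hj'
    omega
  have Pre0 : ∀ (S : α → ℕ), Finset.univ.filter (fun j => S j ≤ 0) = classOf S 0 := by
    intro S
    ext j
    simp only [Finset.mem_filter, Finset.mem_univ, true_and, mem_classOf]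
    omega
  have CONS : ∀ k, probOf (φ Q) (classOf Q k) = probOf (φ Q') (classOf Q k) := by
    intro k
    cases k with
    | zero =>
        have := E 0
        rwa [Pre0 Q] at this
    | succ k =>
        have e1 := E (k+1)
        have e2 := E k
        have d1 := ClassDiff (φ Q) Q k
        have d2 := ClassDiff (φ Q') Q k
        linarith
  refine ⟨CONS, ?_, ?_⟩
  · cases κ with
    | zero =>
        have := G2 0
        rwa [Pre0 Q'] at this
    | succ k =>
        have d1 := ClassDiff (φ Q) Q' k
        have d2 := ClassDiff (φ Q') Q' k
        have hg2 := G2 (k+1)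
        have hpre : Finset.univ.filter (fun j => Q' j ≤ k) = Finset.univ.filter (fun j => Q j ≤ k) := (I1 k (by omega)).symm
        have he : probOf (φ Q) (Finset.univ.filter (fun j => Q' j ≤ k))
            = probOf (φ Q') (Finset.univ.filter (fun j => Q' j ≤ k)) := by
          rw [hpre]
          exact E k
        linarith
  · have d1 := ClassDiff (φ Q) Q' κ
    have d2 := ClassDiff (φ Q') Q' κ
    have hg2 := G2 κ
    have he : probOf (φ Q) (Finset.univ.filter (fun j => Q' j ≤ κ + 1))
        = probOf (φ Q') (Finset.univ.filter (fun j => Q' j ≤ κ + 1)) := by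
      rw [← I2]
      exact E κ
    linarith

end SPaux

/-- Decomposition of strategyproofness: a mechanism is strategyproof if and only if
it is separation monotonic (separation responsive and separation direct),
separation upper invariant, and separation lower invariant. -/
theorem sp_decomposition {α : Type} [Fintype α]
    (φ : (α → ℕ) → α → ℝ) (hlot : ∀ R, IsLottery (φ R)) :
    Strategyproof φ ↔
      (SepResponsive φ ∧ SepDirect φ) ∧
      SepUpperInvariant φ ∧ SepLowerInvariant φ := by
  classical
  constructor
  · intro hSP
    refine ⟨⟨?_, ?_⟩, ?_, ?_⟩
    · intro R R' κ sep
      exact ⟨(SPaux.forward_all hlot hSP sep).2.1, (SPaux.forward_all hlot hSP sep).2.2⟩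
    · intro R R' κ sep hprem
      obtain ⟨k, hk⟩ := hprem
      exact absurd ((SPaux.forward_all hlot hSP sep).1 k) hk
    · intro R R' κ sep k _
      exact (SPaux.forward_all hlot hSP sep).1 k
    · intro R R' κ sep k _
      exact (SPaux.forward_all hlot hSP sep).1 k
  · rintro ⟨⟨hResp, -⟩, hU, hLo⟩
    intro R R' hcanR hcanR' a
    by_cases hAc : (Finset.univ \ Finset.univ.filter (fun j => R j ≤ R a)).Nonempty
    · have heq := SPaux.two_class_eq hResp hU hLo hlot hcanR a hAc
      have hle := SPaux.upper_bound_two_class hResp hU hLo hlot hcanR'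
        (A := Finset.univ.filter (fun j => R j ≤ R a)) ⟨a, by simp⟩ hAc a
      show probOf (φ R) _ ≥ probOf (φ R') _
      rw [heq]
      exact hle
    · rw [Finset.not_nonempty_iff_eq_empty, Finset.sdiff_eq_empty_iff_subset] at hAc
      have huniv : Finset.univ.filter (fun j => R j ≤ R a) = Finset.univ :=
        Finset.univ_subset_iff.1 hAc
      show probOf (φ R) _ ≥ probOf (φ R') _
      rw [huniv, SPaux.probOf_univ (hlot R), SPaux.probOf_univ (hlot R')]
end

section
/- If a mechanism φ is separation responsive, separation upper invariant, and separation lower invariant, then it is multi-separation strategyproof: for every multi-separation (R,R'), φ(R) stochastically dominates φ(R') at R and φ(R') stochastically dominates φ(R) at R'. -/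
open Finset

/-- `(R,R')` is a multi-separation: `R'` refines `R`, i.e. `R'` is obtained from `R`
by partitioning each indifference class `M_k` of `R` into `L_k ≥ 1` strictly ranked
subclasses, preserving the between-class rankings of `R`. -/
def IsMultiSeparation {α : Type} [Fintype α] (R R' : α → ℕ) : Prop :=
  Canonical R ∧ Canonical R' ∧ ∀ a b, R a < R b → R' a < R' b

section Helpers
set_option linter.unusedSectionVars false

variable {α : Type} [Fintype α]

/-- cumulative (strict) sum decomposed into classes -/
lemma cum_lt_classes (R : α → ℕ) (x : α → ℝ) (m : ℕ) :
    ∑ j ∈ univ.filter (fun j => R j < m), x j = ∑ k ∈ Finset.range m, probOf x (classOf R k) := by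
  rw [← Finset.sum_fiberwise_of_maps_to (g := R) (t := Finset.range m)
    (fun j hj => by simp only [mem_filter, mem_range] at hj ⊢; omega)]
  refine Finset.sum_congr rfl fun k hk => Finset.sum_congr ?_ fun _ _ => rfl
  simp only [mem_range] at hk
  unfold classOf
  ext j; simp only [mem_filter, mem_univ, true_and]; omega

lemma cum_gt_classes (R : α → ℕ) (x : α → ℝ) (m : ℕ) :
    ∑ j ∈ univ.filter (fun j => m < R j), x j
      = ∑ k ∈ Finset.Ioc m (univ.sup R), probOf x (classOf R k) := by
  rw [← Finset.sum_fiberwise_of_maps_to (g := R) (t := Finset.Ioc m (univ.sup R))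
    (fun j hj => by
      simp only [mem_filter, mem_Ioc] at hj ⊢
      exact ⟨hj.2, Finset.le_sup (f := R) (mem_univ j)⟩)]
  refine Finset.sum_congr rfl fun k hk => Finset.sum_congr ?_ fun _ _ => rfl
  simp only [mem_Ioc] at hk
  unfold classOf
  ext j; simp only [mem_filter, mem_univ, true_and]; omega

/-- below the split class, cumulative sums are equal (upper invariance) -/
lemma sep_eq_lt (φ : (α → ℕ) → α → ℝ) (hupper : SepUpperInvariant φ)
    {R Rt : α → ℕ} {κ : ℕ} (hsep : IsSeparation R Rt κ) {m : ℕ} (hm : m ≤ κ) :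
    ∑ j ∈ univ.filter (fun j => R j < m), φ R j = ∑ j ∈ univ.filter (fun j => R j < m), φ Rt j := by
  rw [cum_lt_classes, cum_lt_classes]
  refine Finset.sum_congr rfl fun k hk => ?_
  simp only [mem_range] at hk
  exact hupper R Rt κ hsep k (by omega)

/-- at or above the split class, cumulative (≤ m) sums are equal (lower invariance + lottery) -/
lemma sep_eq_ge (φ : (α → ℕ) → α → ℝ) (hlot : ∀ R, IsLottery (φ R))
    (hlower : SepLowerInvariant φ)
    {R Rt : α → ℕ} {κ : ℕ} (hsep : IsSeparation R Rt κ) {m : ℕ} (hm : κ ≤ m) :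
    ∑ j ∈ univ.filter (fun j => R j ≤ m), φ R j = ∑ j ∈ univ.filter (fun j => R j ≤ m), φ Rt j := by
  have h1 := Finset.sum_filter_add_sum_filter_not univ (fun j => R j ≤ m) (φ R)
  have h2 := Finset.sum_filter_add_sum_filter_not univ (fun j => R j ≤ m) (φ Rt)
  have hn : (univ.filter fun j => ¬ R j ≤ m) = univ.filter fun j => m < R j := by
    ext j; simp only [mem_filter, mem_univ, true_and]; omega
  rw [hn] at h1 h2
  have h3 : ∑ j ∈ univ.filter (fun j => m < R j), φ R j
      = ∑ j ∈ univ.filter (fun j => m < R j), φ Rt j := by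
    rw [cum_gt_classes, cum_gt_classes]
    refine Finset.sum_congr rfl fun k hk => ?_
    simp only [mem_Ioc] at hk
    exact hlower R Rt κ hsep k (by omega)
  have e1 := (hlot R).2
  have e2 := (hlot Rt).2
  rw [e1] at h1; rw [e2] at h2
  linarith


/-- ≤ m cumulative = < m+1 cumulative, class decomposition at top -/
lemma cum_le_split (R : α → ℕ) (x : α → ℝ) (κ : ℕ) :
    ∑ j ∈ univ.filter (fun j => R j ≤ κ), x j
      = ∑ j ∈ univ.filter (fun j => R j < κ), x j + probOf x (classOf R κ) := by
  have h : (univ.filter fun j => R j ≤ κ) = univ.filter fun j => R j < κ + 1 := by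
    ext j; simp only [mem_filter, mem_univ, true_and]; omega
  rw [h, cum_lt_classes, Finset.sum_range_succ, ← cum_lt_classes]

/-- responsiveness at the split class -/
lemma sep_ge_kappa (φ : (α → ℕ) → α → ℝ) (hupper : SepUpperInvariant φ)
    (hresp : SepResponsive φ)
    {R Rt : α → ℕ} {κ : ℕ} (hsep : IsSeparation R Rt κ) :
    ∑ j ∈ univ.filter (fun j => Rt j ≤ κ), φ Rt j ≥ ∑ j ∈ univ.filter (fun j => Rt j ≤ κ), φ R j := by
  obtain ⟨hcan, hlt, heq, hgt, hw1, hw2⟩ := id hsep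
  have hlow : (univ.filter fun j => Rt j < κ) = univ.filter fun j => R j < κ := by
    ext j; simp only [mem_filter, mem_univ, true_and]
    constructor
    · intro h
      rcases lt_trichotomy (R j) κ with h'|h'|h'
      · exact h'
      · rcases heq j h' with h''|h'' <;> omega
      · have := hgt j h'; omega
    · intro h; rw [hlt j h]; exact h
  have hrsp := (hresp R Rt κ hsep).1
  rw [cum_le_split, cum_le_split, hlow]
  have heqlow := sep_eq_lt φ hupper hsep (le_refl κ)
  unfold probOf classOf at hrsp ⊢
  linarith

/-- the refinement of `R` splitting class `κ` at `R'`-threshold `c` -/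
def splitAt {α : Type} (R R' : α → ℕ) (κ c : ℕ) : α → ℕ :=
  fun j => if R j < κ ∨ (R j = κ ∧ R' j ≤ c) then R j else R j + 1

section splitAt
variable {R R' : α → ℕ} {κ c : ℕ}
set_option linter.unusedSectionVars false

lemma splitAt_lt {j : α} (h : R j < κ) : splitAt R R' κ c j = R j := if_pos (Or.inl h)

lemma splitAt_eq_le {j : α} (h : R j = κ) (h2 : R' j ≤ c) : splitAt R R' κ c j = R j :=
  if_pos (Or.inr ⟨h, h2⟩)

lemma splitAt_eq_gt {j : α} (h : R j = κ) (h2 : c < R' j) : splitAt R R' κ c j = R j + 1 :=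
  if_neg (by push_neg; exact ⟨by omega, fun _ => by omega⟩)

lemma splitAt_gt {j : α} (h : κ < R j) : splitAt R R' κ c j = R j + 1 :=
  if_neg (by push_neg; exact ⟨by omega, fun h' => by omega⟩)

lemma splitAt_cases (j : α) : splitAt R R' κ c j = R j ∨ splitAt R R' κ c j = R j + 1 := by
  unfold splitAt; split <;> simp

lemma splitAt_mono {i j : α} (h : R i < R j) : splitAt R R' κ c i < splitAt R R' κ c j := by
  rcases le_or_gt (R j) κ with h'|h'
  · have hi : R i < κ := by omega
    rw [splitAt_lt hi]
    rcases splitAt_cases (R := R) (R' := R') (κ := κ) (c := c) j with hc|hc <;> omega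
  · rw [splitAt_gt h']
    rcases splitAt_cases (R := R) (R' := R') (κ := κ) (c := c) i with hc|hc <;> omega

/-- main construction lemma -/
lemma splitAt_spec (hms : IsMultiSeparation R R') (u v : α)
    (huv : R u = R v) (hu : R' u ≤ c) (hv : c < R' v) (hκ : R u = κ) :
    IsSeparation R (splitAt R R' κ c) κ ∧ IsMultiSeparation (splitAt R R' κ c) R' := by
  obtain ⟨hcanR, hcanR', href⟩ := hms
  set Rt := splitAt R R' κ c with hRt
  have hvκ : R v = κ := by omega
  have hsep : IsSeparation R Rt κ := by
    refine ⟨hcanR, fun a ha => splitAt_lt ha, fun a ha => ?_, fun a ha => splitAt_gt ha,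
      ⟨u, hκ, by rw [hRt, splitAt_eq_le hκ hu, hκ]⟩,
      ⟨v, hvκ, by rw [hRt, splitAt_eq_gt hvκ hv, hvκ]⟩⟩
    by_cases h2 : R' a ≤ c
    · left; rw [hRt, splitAt_eq_le ha h2, ha]
    · right; rw [hRt, splitAt_eq_gt ha (by omega), ha]
  refine ⟨hsep, ?_, hcanR', ?_⟩
  · -- Canonical Rt
    intro x k hk
    rcases lt_trichotomy k κ with h|h|h
    · obtain ⟨y, hy⟩ := hcanR u k (by omega)
      exact ⟨y, by rw [hRt, splitAt_lt (by omega), hy]⟩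
    · exact ⟨u, by rw [hRt, splitAt_eq_le hκ hu, hκ, h]⟩
    · rcases eq_or_lt_of_le (Nat.succ_le_of_lt h) with h'|h'
      · exact ⟨v, by rw [hRt, splitAt_eq_gt hvκ hv, hvκ, ← h']⟩
      · -- k > κ + 1
        have hx : k - 1 ≤ R x := by
          rcases splitAt_cases (R := R) (R' := R') (κ := κ) (c := c) x with hc|hc <;>
            rw [← hRt] at hc <;> omega
        obtain ⟨y, hy⟩ := hcanR x (k-1) hx
        exact ⟨y, by rw [hRt, splitAt_gt (by omega), hy]; omega⟩
  · -- refinement Rt → R'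
    intro p q h
    rcases lt_trichotomy (R p) (R q) with h'|h'|h'
    · exact href p q h'
    · -- same R class
      by_cases hp : R' p ≤ c <;> by_cases hq : R' q ≤ c
      · exfalso; rcases lt_trichotomy (R p) κ with h2|h2|h2
        · rw [hRt, splitAt_lt h2, splitAt_lt (by omega)] at h; omega
        · rw [hRt, splitAt_eq_le h2 hp, splitAt_eq_le (by omega) hq] at h; omega
        · rw [hRt, splitAt_gt h2, splitAt_gt (by omega)] at h; omega
      · -- R' p ≤ c < R' q
        omega
      · exfalso
        rcases lt_trichotomy (R p) κ with h2|h2|h2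
        · rw [hRt, splitAt_lt h2, splitAt_lt (by omega)] at h; omega
        · rw [hRt, splitAt_eq_gt h2 (by omega), splitAt_eq_le (by omega) hq] at h; omega
        · rw [hRt, splitAt_gt h2, splitAt_gt (by omega)] at h; omega
      · exfalso; rcases lt_trichotomy (R p) κ with h2|h2|h2
        · rw [hRt, splitAt_lt h2, splitAt_lt (by omega)] at h; omega
        · rw [hRt, splitAt_eq_gt h2 (by omega), splitAt_eq_gt (by omega) (by omega)] at h; omega
        · rw [hRt, splitAt_gt h2, splitAt_gt (by omega)] at h; omega
    · exfalso; have hm : Rt q < Rt p := splitAt_mono h'; omega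

end splitAt

/-- measure of a multi-separation: number of pairs still to be split apart -/
def msr {α : Type} [Fintype α] (R R' : α → ℕ) : ℕ :=
  ((univ ×ˢ univ).filter fun p : α × α => R p.1 = R p.2 ∧ R' p.1 < R' p.2).card

lemma msr_lt {R R' : α → ℕ} {κ c : ℕ} (u v : α)
    (huv : R u = R v) (hu : R' u ≤ c) (hv : c < R' v) (hκ : R u = κ) :
    msr (splitAt R R' κ c) R' < msr R R' := by
  apply Finset.card_lt_card
  constructor
  · intro p hp
    simp only [mem_filter, mem_product, mem_univ, true_and] at hp ⊢
    obtain ⟨h1, h2⟩ := hp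
    refine ⟨?_, h2⟩
    rcases lt_trichotomy (R p.1) (R p.2) with h|h|h
    · have := splitAt_mono (R' := R') (κ := κ) (c := c) h; omega
    · exact h
    · have := splitAt_mono (R' := R') (κ := κ) (c := c) h; omega
  · intro hsub
    have hmem : (u, v) ∈ (univ ×ˢ univ).filter
        fun p : α × α => R p.1 = R p.2 ∧ R' p.1 < R' p.2 := by
      simp only [mem_filter, mem_product, mem_univ, true_and]
      exact ⟨huv, by omega⟩
    have := hsub hmem
    simp only [mem_filter, mem_product, mem_univ, true_and] at this
    rw [splitAt_eq_le hκ hu, splitAt_eq_gt (by omega) hv] at this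
    omega

lemma rankLe (R R' : α → ℕ) (hR : Canonical R)
    (h : ∀ x y, R x < R y → R' x < R' y) : ∀ u, R u ≤ R' u := by
  suffices h' : ∀ k u, R u = k → k ≤ R' u by intro u; exact h' _ u rfl
  intro k
  induction k with
  | zero => intro u _; omega
  | succ k ih =>
    intro u hu
    obtain ⟨b, hb⟩ := hR u k (by omega)
    have h1 := h b u (by omega)
    have h2 := ih b hb
    omega

/-- base case: a multi-separation with no splittable pair is trivial -/
lemma msr_zero_eq {R R' : α → ℕ} (hms : IsMultiSeparation R R')
    (h0 : ∀ x y : α, R x = R y → ¬ R' x < R' y) : R = R' := by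
  obtain ⟨hcanR, hcanR', href⟩ := hms
  have hrev : ∀ x y, R' x < R' y → R x < R y := by
    intro x y hxy
    rcases lt_trichotomy (R x) (R y) with h|h|h
    · exact h
    · exact absurd hxy (h0 x y h)
    · exact absurd (href y x h) (by omega)
  funext u
  have h1 := rankLe R R' hcanR href u
  have h2 := rankLe R' R hcanR' hrev u
  omega

set_option linter.unusedSectionVars false

lemma main_aux (φ : (α → ℕ) → α → ℝ) (hlot : ∀ R, IsLottery (φ R)) (hresp : SepResponsive φ)
    (hupper : SepUpperInvariant φ) (hlower : SepLowerInvariant φ) :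
    ∀ n (R R' : α → ℕ), IsMultiSeparation R R' → msr R R' = n →
      SD R (φ R) (φ R') ∧ SD R' (φ R') (φ R) := by
  intro n
  induction n using Nat.strong_induction_on with
  | _ n IH =>
    intro R R' hms hn
    by_cases hE : ∃ p : α × α, R p.1 = R p.2 ∧ R' p.1 < R' p.2
    · obtain ⟨⟨a, b⟩, hab1, hab2⟩ := hE
      dsimp only at hab1 hab2
      have KEY : ∀ (u v : α) (c : ℕ), R u = R v → R' u ≤ c → c < R' v →
          IsSeparation R (splitAt R R' (R u) c) (R u) ∧
          SD (splitAt R R' (R u) c) (φ (splitAt R R' (R u) c)) (φ R') ∧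
          SD R' (φ R') (φ (splitAt R R' (R u) c)) := by
        intro u v c h1 h2 h3
        obtain ⟨hsep, hms'⟩ := splitAt_spec hms u v h1 h2 h3 rfl
        have hlt := msr_lt u v h1 h2 h3 rfl
        have hIH := IH (msr (splitAt R R' (R u) c) R') (by omega) _ R' hms' rfl
        exact ⟨hsep, hIH.1, hIH.2⟩
      constructor
      · -- SD R (φ R) (φ R')
        intro a₀
        obtain ⟨hsep, hSD1, hSD2⟩ := KEY a b (R' a) hab1 le_rfl hab2
        set Rt := splitAt R R' (R a) (R' a) with hRt
        rcases lt_or_ge (R a₀) (R a) with hm | hm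
        · have hseteq : (univ.filter fun j => R j ≤ R a₀)
              = univ.filter fun j => R j < R a₀ + 1 := by
            ext j; simp only [mem_filter, mem_univ, true_and]; omega
          have heq : ∑ j ∈ univ.filter (fun j => R j ≤ R a₀), φ R j
              = ∑ j ∈ univ.filter (fun j => R j ≤ R a₀), φ Rt j := by
            rw [hseteq]; exact sep_eq_lt φ hupper hsep (m := R a₀ + 1) (by omega)
          have hset2 : (univ.filter fun j => Rt j ≤ Rt a₀)
              = univ.filter fun j => R j ≤ R a₀ := by
            have ha₀ : Rt a₀ = R a₀ := splitAt_lt hm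
            ext j; simp only [mem_filter, mem_univ, true_and, ha₀]
            constructor
            · intro h
              rcases splitAt_cases (R := R) (R' := R') (κ := R a) (c := R' a) j with hc|hc <;>
                rw [← hRt] at hc <;> omega
            · intro h
              rw [hRt, splitAt_lt (by omega)]; exact h
          have hd := hSD1 a₀
          rw [hset2] at hd
          calc ∑ j ∈ univ.filter (fun j => R j ≤ R a₀), φ R j
              = ∑ j ∈ univ.filter (fun j => R j ≤ R a₀), φ Rt j := heq
            _ ≥ ∑ j ∈ univ.filter (fun j => R j ≤ R a₀), φ R' j := hd
        · have heq := sep_eq_ge φ hlot hlower hsep (m := R a₀) hm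
          have hwex : ∃ w, Rt w = R a₀ + 1 := by
            rcases eq_or_lt_of_le hm with h|h
            · exact ⟨b, by rw [hRt, splitAt_eq_gt (by omega) hab2]; omega⟩
            · exact ⟨a₀, by rw [hRt, splitAt_gt h]⟩
          obtain ⟨w, hw⟩ := hwex
          have hd := hSD1 w
          have hset2 : (univ.filter fun j => Rt j ≤ Rt w)
              = univ.filter fun j => R j ≤ R a₀ := by
            rw [hw]; ext j; simp only [mem_filter, mem_univ, true_and]
            rcases lt_trichotomy (R j) (R a) with h2|h2|h2
            · rw [hRt, splitAt_lt h2]; omega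
            · constructor
              · intro _; omega
              · intro _
                rcases splitAt_cases (R := R) (R' := R') (κ := R a) (c := R' a) j with hc|hc <;>
                  rw [← hRt] at hc <;> omega
            · rw [hRt, splitAt_gt h2]; omega
          rw [hset2] at hd
          calc ∑ j ∈ univ.filter (fun j => R j ≤ R a₀), φ R j
              = ∑ j ∈ univ.filter (fun j => R j ≤ R a₀), φ Rt j := heq
            _ ≥ ∑ j ∈ univ.filter (fun j => R j ≤ R a₀), φ R' j := hd
      · -- SD R' (φ R') (φ R)
        intro a₀
        by_cases hcut : ∀ p q : α, R' p ≤ R' a₀ → R p = R q → R' q ≤ R' a₀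
        · -- the R'-cumulative set is a union of R-classes
          obtain ⟨hsep, hSD1, hSD2⟩ := KEY a b (R' a) hab1 le_rfl hab2
          set Rt := splitAt R R' (R a) (R' a) with hRt
          have hne : (univ.filter fun j => R' j ≤ R' a₀).Nonempty :=
            ⟨a₀, by simp only [mem_filter, mem_univ, true_and, le_refl]⟩
          obtain ⟨u₀, hu₀S, hu₀⟩ := Finset.exists_mem_eq_sup _ hne R
          simp only [mem_filter, mem_univ, true_and] at hu₀S
          have hSm : (univ.filter fun j => R' j ≤ R' a₀)
              = univ.filter fun j => R j ≤ R u₀ := by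
            ext j; simp only [mem_filter, mem_univ, true_and]
            constructor
            · intro h
              have hj : j ∈ univ.filter fun j => R' j ≤ R' a₀ := by
                simp only [mem_filter, mem_univ, true_and]; exact h
              have := Finset.le_sup (f := R) hj
              omega
            · intro h
              rcases lt_or_eq_of_le h with h2|h2
              · have := hms.2.2 j u₀ h2; omega
              · exact hcut u₀ j hu₀S (by omega)
          have h1 := hSD2 a₀
          rw [hSm] at h1 ⊢
          have heq : ∑ j ∈ univ.filter (fun j => R j ≤ R u₀), φ R j
              = ∑ j ∈ univ.filter (fun j => R j ≤ R u₀), φ Rt j := by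
            rcases lt_or_ge (R u₀) (R a) with h|h
            · have hseteq : (univ.filter fun j => R j ≤ R u₀)
                  = univ.filter fun j => R j < R u₀ + 1 := by
                ext j; simp only [mem_filter, mem_univ, true_and]; omega
              rw [hseteq]; exact sep_eq_lt φ hupper hsep (m := R u₀ + 1) (by omega)
            · exact sep_eq_ge φ hlot hlower hsep h
          linarith
        · push_neg at hcut
          obtain ⟨u, v, hu, huv, hv⟩ := hcut
          obtain ⟨hsep, hSD1, hSD2⟩ := KEY u v (R' a₀) huv hu (by omega)
          set Rt := splitAt R R' (R u) (R' a₀) with hRt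
          have hS : (univ.filter fun j => R' j ≤ R' a₀)
              = univ.filter fun j => Rt j ≤ R u := by
            ext j; simp only [mem_filter, mem_univ, true_and]
            constructor
            · intro h
              rcases lt_trichotomy (R j) (R u) with h2|h2|h2
              · rw [hRt, splitAt_lt h2]; omega
              · rw [hRt, splitAt_eq_le h2 h]; omega
              · exfalso
                have hvj : R' v < R' j := hms.2.2 v j (by omega)
                omega
            · intro h
              rcases lt_trichotomy (R j) (R u) with h2|h2|h2
              · have := hms.2.2 j u h2; omega
              · by_contra hc
                rw [hRt, splitAt_eq_gt h2 (by omega)] at h; omega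
              · rw [hRt, splitAt_gt h2] at h; omega
          have h1 := hSD2 a₀
          have h2 := sep_ge_kappa φ hupper hresp hsep
          rw [hS] at h1 ⊢
          calc ∑ j ∈ univ.filter (fun j => Rt j ≤ R u), φ R' j
              ≥ ∑ j ∈ univ.filter (fun j => Rt j ≤ R u), φ Rt j := h1
            _ ≥ ∑ j ∈ univ.filter (fun j => Rt j ≤ R u), φ R j := h2
    · push_neg at hE
      have hRR' : R = R' := msr_zero_eq hms (fun x y h h' => by
        have := hE (x, y) h; dsimp only at this; omega)
      subst hRR'
      exact ⟨fun a₀ => le_refl _, fun a₀ => le_refl _⟩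

end Helpers

/-- If a mechanism is separation responsive, separation upper invariant and
separation lower invariant, then it is multi-separation strategyproof. -/
theorem axioms_imply_multi_sep_sp {α : Type} [Fintype α]
    (φ : (α → ℕ) → α → ℝ) (hlot : ∀ R, IsLottery (φ R))
    (hresp : SepResponsive φ)
    (hupper : SepUpperInvariant φ) (hlower : SepLowerInvariant φ) :
    ∀ R R', IsMultiSeparation R R' →
      SD R (φ R) (φ R') ∧ SD R' (φ R') (φ R) := by
  intro R R' hms
  exact main_aux φ hlot hresp hupper hlower (msr R R') R R' hms rfl
end
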